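/- arXiv:0802.0260 — 5 statements merged into one kernel-verified Lean document; each statement's English description precedes it below -/
import Mathlib

section
/- Generalised splicing with rule set R = V⁺-rules equals generalised self-assembly: for languages L₁, L₂, the set of all words z such that z = u₁xv₂ or z = u₂xv₁ for some w₁ = u₁xv₁ ∈ L₁, w₂ = u₂xv₂ ∈ L₂ and nonempty word x, together with L₁ ∪ L₂, equals GSA(L₁,L₂) ∪ L₁ ∪ L₂. -/
/-- `GSAx x w₁ w₂`: the generalised `x`-self-assembly of words `w₁` and `w₂`. -/
def GSAx {α : Type*} (x w₁ w₂ : List α) : Set (List α) :=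
  {z | ∃ u₁ v₁ u₂ v₂ : List α, w₁ = u₁ ++ x ++ v₁ ∧ w₂ = u₂ ++ x ++ v₂ ∧
    (z = u₁ ++ x ++ v₁ ∨ z = u₂ ++ x ++ v₂ ∨ z = u₁ ++ x ++ v₂ ∨ z = u₂ ++ x ++ v₁)}

/-- `GSAw w₁ w₂`: union of `GSAx x w₁ w₂` over all nonempty common subwords `x`. -/
def GSAw {α : Type*} (w₁ w₂ : List α) : Set (List α) :=
  ⋃ x ∈ {x : List α | x ≠ []}, GSAx x w₁ w₂

/-- `GSAL L₁ L₂`: generalised self-assembly of two languages. -/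
def GSAL {α : Type*} (L₁ L₂ : Set (List α)) : Set (List α) :=
  ⋃ w₁ ∈ L₁, ⋃ w₂ ∈ L₂, GSAw w₁ w₂

/-- Generalised splicing with rules x#$x# for x ∈ V⁺, together with the
parent languages, coincides with generalised self-assembly together with the
parent languages. -/
theorem gs_eq_gsa {α : Type*} (L₁ L₂ : Set (List α)) :
    ({z | ∃ x : List α, x ≠ [] ∧ ∃ u₁ v₁ u₂ v₂ : List α,
        u₁ ++ x ++ v₁ ∈ L₁ ∧ u₂ ++ x ++ v₂ ∈ L₂ ∧
        (z = u₁ ++ x ++ v₂ ∨ z = u₂ ++ x ++ v₁)} ∪ L₁ ∪ L₂)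
      = GSAL L₁ L₂ ∪ L₁ ∪ L₂ := by
  ext z
  simp only [Set.mem_union, Set.mem_setOf_eq, GSAL, GSAw, GSAx, Set.mem_iUnion,
    Set.mem_setOf_eq]
  constructor
  · rintro ((⟨x, hx, u₁, v₁, u₂, v₂, h₁, h₂, hz⟩ | h) | h)
    · exact Or.inl (Or.inl ⟨_, h₁, _, h₂, x, hx, u₁, v₁, u₂, v₂, rfl, rfl, by tauto⟩)
    · exact Or.inl (Or.inr h)
    · exact Or.inr h
  · rintro ((⟨w₁, h₁, w₂, h₂, x, hx, u₁, v₁, u₂, v₂, e₁, e₂, hz⟩ | h) | h)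
    · subst e₁; subst e₂
      rcases hz with h | h | h | h
      · exact Or.inl (Or.inr (h ▸ h₁))
      · exact Or.inr (h ▸ h₂)
      · exact Or.inl (Or.inl ⟨x, hx, u₁, v₁, u₂, v₂, h₁, h₂, Or.inl h⟩)
      · exact Or.inl (Or.inl ⟨x, hx, u₁, v₁, u₂, v₂, h₁, h₂, Or.inr h⟩)
    · exact Or.inl (Or.inr h)
    · exact Or.inr h
end

section
/- The generalised self-assembly of two regular languages is regular: if L₁ and L₂ are regular languages, then GSA(L₁,L₂) is regular. -/
/- ### Auxiliary languages -/

/-- Letter `a` occurs in some word of `L`. -/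
def CrossP {α : Type*} (L : Set (List α)) (a : α) : Prop :=
  ∃ u v, u ++ [a] ++ v ∈ L

/-- Words containing a letter that occurs in some word of `L`. -/
def CLang {α : Type*} (L : Set (List α)) : Set (List α) :=
  {z | ∃ a ∈ z, CrossP L a}

/-- Mixed assemblies: a prefix from `L₁` glued to a suffix from `L₂` at a common letter. -/
def MLang {α : Type*} (L₁ L₂ : Set (List α)) : Set (List α) :=
  {z | ∃ u a v, z = u ++ [a] ++ v ∧ (∃ v', u ++ [a] ++ v' ∈ L₁) ∧
      ∃ u', u' ++ [a] ++ v ∈ L₂}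

lemma gsal_eq {α : Type*} (L₁ L₂ : Set (List α)) :
    GSAL L₁ L₂ = (L₁ ∩ CLang L₂) ∪ (L₂ ∩ CLang L₁) ∪ MLang L₁ L₂ ∪ MLang L₂ L₁ := by
  ext z
  simp only [GSAL, GSAw, GSAx, Set.mem_iUnion, Set.mem_setOf_eq, Set.mem_union, Set.mem_inter_iff]
  constructor
  · rintro ⟨w₁, h₁, w₂, h₂, x, hx, u₁, v₁, u₂, v₂, e₁, e₂, hz⟩
    obtain ⟨a, x', rfl⟩ : ∃ a x', x = a :: x' := by
      cases x with
      | nil => exact absurd rfl hx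
      | cons a x' => exact ⟨a, x', rfl⟩
    subst e₁ e₂
    have h₁' : u₁ ++ [a] ++ (x' ++ v₁) ∈ L₁ := by simpa using h₁
    have h₂' : u₂ ++ [a] ++ (x' ++ v₂) ∈ L₂ := by simpa using h₂
    rcases hz with rfl | rfl | rfl | rfl
    · exact Or.inl <| Or.inl <| Or.inl ⟨h₁, a, by simp, u₂, x' ++ v₂, h₂'⟩
    · exact Or.inl <| Or.inl <| Or.inr ⟨h₂, a, by simp, u₁, x' ++ v₁, h₁'⟩
    · exact Or.inl <| Or.inr ⟨u₁, a, x' ++ v₂, by simp, ⟨x' ++ v₁, h₁'⟩, ⟨u₂, h₂'⟩⟩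
    · exact Or.inr ⟨u₂, a, x' ++ v₁, by simp, ⟨x' ++ v₂, h₂'⟩, ⟨u₁, h₁'⟩⟩
  · rintro (((⟨hz, a, haz, u', v', hw⟩ | ⟨hz, a, haz, u', v', hw⟩) |
        ⟨u, a, v, rfl, ⟨v', h₁⟩, ⟨u', h₂⟩⟩) | ⟨u, a, v, rfl, ⟨v', h₂⟩, ⟨u', h₁⟩⟩)
    · obtain ⟨u, v, rfl⟩ := List.append_of_mem haz
      exact ⟨_, hz, _, hw, [a], by simp, u, v, u', v', by simp, rfl, Or.inl (by simp)⟩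
    · obtain ⟨u, v, rfl⟩ := List.append_of_mem haz
      exact ⟨_, hw, _, hz, [a], by simp, u', v', u, v, rfl, by simp,
        Or.inr <| Or.inl (by simp)⟩
    · exact ⟨_, h₁, _, h₂, [a], by simp, u, v', u', v, rfl, rfl, Or.inr <| Or.inr <| Or.inl rfl⟩
    · exact ⟨_, h₁, _, h₂, [a], by simp, u', v, u, v', rfl, rfl,
        Or.inr <| Or.inr <| Or.inr rfl⟩

/- ### A two-state DFA recognising `CLang` -/

open Classical in
/-- DFA tracking whether a letter satisfying `P` has been seen. -/
noncomputable def seenDFA {α : Type*} (P : α → Prop) : DFA α Bool where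
  step b a := b || decide (P a)
  start := false
  accept := {true}

lemma seenDFA_evalFrom {α : Type*} (P : α → Prop) (b : Bool) (z : List α) :
    (seenDFA P).evalFrom b z = true ↔ b = true ∨ ∃ a ∈ z, P a := by
  classical
  induction z generalizing b with
  | nil => simp [DFA.evalFrom]
  | cons c z ih =>
    rw [show (seenDFA P).evalFrom b (c :: z) =
        (seenDFA P).evalFrom (b || decide (P c)) z from rfl, ih]
    simp only [Bool.or_eq_true, decide_eq_true_eq, List.mem_cons]
    constructor
    · rintro ((h | h) | ⟨a, ha, hP⟩)
      exacts [Or.inl h, Or.inr ⟨c, Or.inl rfl, h⟩, Or.inr ⟨a, Or.inr ha, hP⟩]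
    · rintro (h | ⟨a, rfl | ha, hP⟩)
      exacts [Or.inl (Or.inl h), Or.inl (Or.inr hP), Or.inr ⟨a, ha, hP⟩]

lemma seenDFA_accepts {α : Type*} (P : α → Prop) :
    (seenDFA P).accepts = {z : List α | ∃ a ∈ z, P a} := by
  ext z
  rw [DFA.mem_accepts]
  show (seenDFA P).evalFrom false z ∈ ({true} : Set Bool) ↔ _
  rw [Set.mem_singleton_iff, seenDFA_evalFrom]
  constructor
  · rintro (h | h)
    · exact absurd h (by simp)
    · exact h
  · exact Or.inr

lemma cLang_regular {α : Type} (L : Set (List α)) : Language.IsRegular (CLang L : Set (List α)) :=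
  ⟨Bool, inferInstance, seenDFA (CrossP L), by rw [seenDFA_accepts]; rfl⟩

/- ### Product DFA: boolean combinations of regular languages -/

/-- Product DFA with acceptance given by `f` applied to the components' acceptance. -/
def prodDFA {α σ₁ σ₂ : Type*} (M₁ : DFA α σ₁) (M₂ : DFA α σ₂) (f : Prop → Prop → Prop) :
    DFA α (σ₁ × σ₂) where
  step p a := (M₁.step p.1 a, M₂.step p.2 a)
  start := (M₁.start, M₂.start)
  accept := {p | f (p.1 ∈ M₁.accept) (p.2 ∈ M₂.accept)}

lemma prodDFA_evalFrom {α σ₁ σ₂ : Type*} (M₁ : DFA α σ₁) (M₂ : DFA α σ₂)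
    (f : Prop → Prop → Prop) (p : σ₁ × σ₂) (z : List α) :
    (prodDFA M₁ M₂ f).evalFrom p z = (M₁.evalFrom p.1 z, M₂.evalFrom p.2 z) := by
  induction z generalizing p with
  | nil => rfl
  | cons a z ih => exact ih _

lemma prodDFA_accepts {α σ₁ σ₂ : Type*} (M₁ : DFA α σ₁) (M₂ : DFA α σ₂)
    (f : Prop → Prop → Prop) :
    (prodDFA M₁ M₂ f).accepts = {z | f (z ∈ M₁.accepts) (z ∈ M₂.accepts)} := by
  ext z
  rw [DFA.mem_accepts]
  show (prodDFA M₁ M₂ f).evalFrom (prodDFA M₁ M₂ f).start z ∈ _ ↔ _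
  rw [show (prodDFA M₁ M₂ f).start = (M₁.start, M₂.start) from rfl, prodDFA_evalFrom]
  rfl

lemma isRegular_inter {α : Type} {S₁ S₂ : Set (List α)} (h₁ : Language.IsRegular S₁)
    (h₂ : Language.IsRegular S₂) : Language.IsRegular (S₁ ∩ S₂ : Set (List α)) := by
  obtain ⟨σ₁, _, M₁, hM₁⟩ := h₁
  obtain ⟨σ₂, _, M₂, hM₂⟩ := h₂
  exact ⟨σ₁ × σ₂, inferInstance, prodDFA M₁ M₂ (· ∧ ·), by
    rw [prodDFA_accepts, hM₁, hM₂]; rfl⟩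

lemma isRegular_union {α : Type} {S₁ S₂ : Set (List α)} (h₁ : Language.IsRegular S₁)
    (h₂ : Language.IsRegular S₂) : Language.IsRegular (S₁ ∪ S₂ : Set (List α)) := by
  obtain ⟨σ₁, _, M₁, hM₁⟩ := h₁
  obtain ⟨σ₂, _, M₂, hM₂⟩ := h₂
  exact ⟨σ₁ × σ₂, inferInstance, prodDFA M₁ M₂ (· ∨ ·), by
    rw [prodDFA_accepts, hM₁, hM₂]; rfl⟩

/- ### NFA for `MLang` -/

/-- NFA recognising `MLang M₁.accepts M₂.accepts`: run `M₁`, nondeterministically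
cross over at a letter `a` (provided `M₁` could still accept and `a` occurs after a
reachable `M₂`-state), then run `M₂`. -/
def mixNFA {α σ₁ σ₂ : Type*} (M₁ : DFA α σ₁) (M₂ : DFA α σ₂) : NFA α (σ₁ ⊕ σ₂) where
  step s a :=
    match s with
    | Sum.inl q => {Sum.inl (M₁.step q a)} ∪
        {s | (∃ v', M₁.evalFrom (M₁.step q a) v' ∈ M₁.accept) ∧
          ∃ u', s = Sum.inr (M₂.step (M₂.eval u') a)}
    | Sum.inr s => {Sum.inr (M₂.step s a)}
  start := {Sum.inl M₁.start}
  accept := {s | ∃ q ∈ M₂.accept, s = Sum.inr q}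

section mixNFA

variable {α σ₁ σ₂ : Type*} (M₁ : DFA α σ₁) (M₂ : DFA α σ₂)

lemma mixNFA_inl (z : List α) (q : σ₁) :
    Sum.inl q ∈ (mixNFA M₁ M₂).eval z ↔ q = M₁.eval z := by
  induction z using List.reverseRecOn generalizing q with
  | nil => simp [mixNFA, NFA.eval, NFA.evalFrom, DFA.eval, DFA.evalFrom, eq_comm]
  | append_singleton z b ih =>
    rw [NFA.eval_append_singleton, NFA.mem_stepSet]
    constructor
    · rintro ⟨t, ht, hst⟩
      rcases t with q' | s'
      · rw [ih] at ht
        subst ht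
        rcases hst with h | hmem
        · rw [Set.mem_singleton_iff] at h
          rw [DFA.eval_append_singleton]
          exact Sum.inl.inj h
        · obtain ⟨-, u', h⟩ := hmem
          exact absurd h (by simp)
      · exact absurd hst (by simp [mixNFA])
    · rintro rfl
      refine ⟨Sum.inl (M₁.eval z), (ih _).2 rfl, Or.inl ?_⟩
      rw [DFA.eval_append_singleton]
      rfl

lemma mixNFA_inr (z : List α) (s : σ₂) :
    Sum.inr s ∈ (mixNFA M₁ M₂).eval z ↔
      ∃ u a v, z = u ++ [a] ++ v ∧ (∃ v', M₁.eval (u ++ [a] ++ v') ∈ M₁.accept) ∧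
        ∃ u', s = M₂.eval (u' ++ [a] ++ v) := by
  induction z using List.reverseRecOn generalizing s with
  | nil =>
    simp only [NFA.eval, NFA.evalFrom, List.foldl_nil]
    constructor
    · rintro h
      exact absurd h (by simp [mixNFA])
    · rintro ⟨u, a, v, h, -⟩
      exact absurd h (by simp)
  | append_singleton z b ih =>
    rw [NFA.eval_append_singleton, NFA.mem_stepSet]
    constructor
    · rintro ⟨t, ht, hst⟩
      rcases t with q | s'
      · rw [mixNFA_inl] at ht
        subst ht
        rcases hst with h | ⟨⟨v', hv'⟩, u', hu'⟩
        · exact absurd h (by simp)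
        · refine ⟨z, b, [], by simp, ⟨v', ?_⟩, u', ?_⟩
          · rwa [DFA.eval, DFA.evalFrom_of_append, DFA.evalFrom_of_append,
              DFA.evalFrom_singleton]
          · rw [Sum.inr.injEq] at hu'
            rw [hu']
            rw [DFA.eval, DFA.evalFrom_of_append, DFA.evalFrom_of_append,
              DFA.evalFrom_singleton]
            rfl
      · obtain ⟨u, a, v, rfl, hL₁, u', rfl⟩ := (ih s').1 ht
        have hst' : s = M₂.step (M₂.eval (u' ++ [a] ++ v)) b := by
          simpa [mixNFA] using hst
        refine ⟨u, a, v ++ [b], by simp, hL₁, u', ?_⟩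
        rw [hst', show u' ++ [a] ++ (v ++ [b]) = (u' ++ [a] ++ v) ++ [b] by simp,
          DFA.eval_append_singleton]
    · rintro ⟨u, a, v, hz, hL₁, u', rfl⟩
      rcases v.eq_nil_or_concat with rfl | ⟨v', c, rfl⟩
      · obtain ⟨rfl, rfl⟩ : z = u ∧ b = a :=
          List.concat_inj.mp (by simpa [List.concat] using hz)
        refine ⟨Sum.inl (M₁.eval z), (mixNFA_inl M₁ M₂ z _).2 rfl, Or.inr ⟨?_, u', ?_⟩⟩
        · obtain ⟨v', hv'⟩ := hL₁
          refine ⟨v', ?_⟩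
          rwa [DFA.eval, DFA.evalFrom_of_append, DFA.evalFrom_of_append,
            DFA.evalFrom_singleton] at hv'
        · rw [Sum.inr.injEq, DFA.eval, DFA.evalFrom_of_append, DFA.evalFrom_of_append,
            DFA.evalFrom_singleton]
          rfl
      · simp only [List.concat_eq_append] at hz ⊢
        obtain ⟨hz', rfl⟩ : z = u ++ [a] ++ v' ∧ b = c :=
          List.concat_inj.mp (by simpa [List.concat] using hz)
        refine ⟨Sum.inr (M₂.eval (u' ++ [a] ++ v')),
          (ih _).2 ⟨u, a, v', hz', hL₁, u', rfl⟩, ?_⟩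
        show Sum.inr (M₂.eval (u' ++ [a] ++ (v' ++ [b]))) ∈
          ({Sum.inr (M₂.step (M₂.eval (u' ++ [a] ++ v')) b)} : Set (σ₁ ⊕ σ₂))
        rw [show u' ++ [a] ++ (v' ++ [b]) = (u' ++ [a] ++ v') ++ [b] by simp,
          DFA.eval_append_singleton]
        rfl

lemma mixNFA_accepts :
    (mixNFA M₁ M₂).accepts = MLang (M₁.accepts : Set (List α)) M₂.accepts := by
  ext z
  rw [NFA.mem_accepts]
  constructor
  · rintro ⟨t, ⟨q, hq, rfl⟩, ht⟩
    obtain ⟨u, a, v, rfl, hL₁, u', rfl⟩ := (mixNFA_inr M₁ M₂ z q).1 ht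
    exact ⟨u, a, v, rfl, hL₁, u', hq⟩
  · rintro ⟨u, a, v, rfl, hL₁, u', hL₂⟩
    exact ⟨Sum.inr (M₂.eval (u' ++ [a] ++ v)), ⟨_, hL₂, rfl⟩,
      (mixNFA_inr M₁ M₂ _ _).2 ⟨u, a, v, rfl, hL₁, u', rfl⟩⟩

end mixNFA

lemma mLang_regular {α : Type} {L₁ L₂ : Language α} (h₁ : L₁.IsRegular)
    (h₂ : L₂.IsRegular) : Language.IsRegular (MLang (L₁ : Set (List α)) L₂) := by
  classical
  obtain ⟨σ₁, _, M₁, rfl⟩ := h₁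
  obtain ⟨σ₂, _, M₂, rfl⟩ := h₂
  exact ⟨Set (σ₁ ⊕ σ₂), inferInstance, (mixNFA M₁ M₂).toDFA, by
    rw [NFA.toDFA_correct, mixNFA_accepts]⟩

/-- Generalised self-assembly of two regular languages is regular. -/
theorem gsal_regular {α : Type} (L₁ L₂ : Language α)
    (h₁ : L₁.IsRegular) (h₂ : L₂.IsRegular) :
    Language.IsRegular (GSAL (L₁ : Set (List α)) (L₂ : Set (List α))) := by
  rw [gsal_eq (α := α) L₁ L₂]
  exact isRegular_union (isRegular_union (isRegular_union
    (isRegular_inter h₁ (cLang_regular (L₂ : Set (List α))))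
    (isRegular_inter h₂ (cLang_regular (L₁ : Set (List α)))))
    (mLang_regular h₁ h₂)) (mLang_regular h₂ h₁)
end

section
/- The generalised self-assembly of a finite language with a regular language is regular: if L₁ is finite and L₂ is regular, then GSA(L₁,L₂) is regular. -/
namespace GSAHelp



variable {α : Type} {σ τ : Type}

theorem evalFrom_cons (M : DFA α σ) (s : σ) (a : α) (w : List α) :
    M.evalFrom s (a :: w) = M.evalFrom (M.step s a) w := rfl

/-- Product DFA with arbitrary propositional combination of acceptance. -/
def prodDFA (M : DFA α σ) (N : DFA α τ) (f : Prop → Prop → Prop) : DFA α (σ × τ) where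
  step p a := (M.step p.1 a, N.step p.2 a)
  start := (M.start, N.start)
  accept := {p | f (p.1 ∈ M.accept) (p.2 ∈ N.accept)}

theorem prodDFA_evalFrom (M : DFA α σ) (N : DFA α τ) (f : Prop → Prop → Prop)
    (w : List α) (p : σ × τ) :
    (prodDFA M N f).evalFrom p w = (M.evalFrom p.1 w, N.evalFrom p.2 w) := by
  induction w generalizing p with
  | nil => rfl
  | cons a w ih => rw [evalFrom_cons, ih]; rfl

theorem isRegular_binop (f : Prop → Prop → Prop) {L K : Language α}
    (hL : L.IsRegular) (hK : K.IsRegular) :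
    Language.IsRegular {w | f (w ∈ L) (w ∈ K)} := by
  obtain ⟨σ, _, M, rfl⟩ := hL
  obtain ⟨τ, _, N, rfl⟩ := hK
  refine ⟨σ × τ, inferInstance, prodDFA M N f, ?_⟩
  ext w
  rw [DFA.mem_accepts]
  show (prodDFA M N f).evalFrom (M.start, N.start) w ∈ _ ↔ _
  rw [prodDFA_evalFrom]
  rfl

theorem isRegular_of_eq {L K : Set (List α)} (e : K = L) (h : Language.IsRegular L) :
    Language.IsRegular K := e ▸ h

theorem isRegular_union {L K : Set (List α)} (hL : Language.IsRegular L)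
    (hK : Language.IsRegular K) : Language.IsRegular (L ∪ K : Set (List α)) := by
  have := isRegular_binop Or (L := L) (K := K) hL hK
  exact isRegular_of_eq rfl this

theorem isRegular_inter {L K : Set (List α)} (hL : Language.IsRegular L)
    (hK : Language.IsRegular K) : Language.IsRegular (L ∩ K : Set (List α)) := by
  have := isRegular_binop And (L := L) (K := K) hL hK
  exact isRegular_of_eq rfl this

theorem isRegular_empty : Language.IsRegular (∅ : Set (List α)) :=
  ⟨Unit, inferInstance, ⟨fun _ _ => (), (), ∅⟩, by
    ext w; exact iff_of_false (fun h => h) (fun h => h)⟩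

theorem isRegular_univ : Language.IsRegular (Set.univ : Set (List α)) :=
  ⟨Unit, inferInstance, ⟨fun _ _ => (), (), Set.univ⟩, by
    ext w; simp only [DFA.mem_accepts]; exact ⟨fun _ => trivial, fun _ => trivial⟩⟩

theorem isRegular_biUnion {ι : Type*} {S : Set ι} (hS : S.Finite) {f : ι → Set (List α)}
    (h : ∀ i ∈ S, Language.IsRegular (f i)) :
    Language.IsRegular (⋃ i ∈ S, f i) := by
  refine Set.Finite.induction_on S hS (motive := fun S _ => (∀ i ∈ S, Language.IsRegular (f i)) →
      Language.IsRegular (⋃ i ∈ S, f i)) ?_ ?_ h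
  · intro _; simpa using isRegular_empty
  · intro a s _ _ ih h'
    rw [Set.biUnion_insert]
    exact isRegular_union (h' a (Set.mem_insert a s))
      (ih fun i hi => h' i (Set.mem_insert_of_mem a hi))






theorem evalFrom_cons' (M : DFA α σ) (s : σ) (a : α) (w : List α) :
    M.evalFrom s (a :: w) = M.evalFrom (M.step s a) w := rfl

/-- Subset DFA with arbitrary start set. -/
def existsDFA (M : DFA α σ) (T : Set σ) : DFA α (Set σ) where
  step S a := (fun q => M.step q a) '' S
  start := T
  accept := {S | ∃ q ∈ S, q ∈ M.accept}

theorem existsDFA_evalFrom (M : DFA α σ) (T : Set σ) (w : List α) (S : Set σ) :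
    (existsDFA M T).evalFrom S w = (fun q => M.evalFrom q w) '' S := by
  induction w generalizing S with
  | nil => simp [DFA.evalFrom]
  | cons a w ih =>
      rw [evalFrom_cons', ih]
      show (fun q => M.evalFrom q w) '' ((fun q => M.step q a) '' S) = _
      rw [Set.image_image]
      rfl

theorem isRegular_existsStart [Fintype σ] (M : DFA α σ) (T : Set σ) :
    Language.IsRegular {v | ∃ t ∈ T, M.evalFrom t v ∈ M.accept} := by
  refine ⟨Set σ, inferInstance, existsDFA M T, ?_⟩
  ext v
  rw [DFA.mem_accepts]
  show (existsDFA M T).evalFrom T v ∈ _ ↔ _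
  rw [existsDFA_evalFrom]
  constructor
  · rintro ⟨q, ⟨t, ht, rfl⟩, hq⟩; exact ⟨t, ht, hq⟩
  · rintro ⟨t, ht, hq⟩; exact ⟨_, ⟨t, ht, rfl⟩, hq⟩

theorem isRegular_changeAccept [Fintype σ] (M : DFA α σ) (G : Set σ) :
    Language.IsRegular {w | M.evalFrom M.start w ∈ G} :=
  ⟨σ, inferInstance, ⟨M.step, M.start, G⟩, rfl⟩

theorem suffix_append_singleton {s w : List α} {a : α} :
    s <:+ w ++ [a] ↔ s = [] ∨ ∃ t, t <:+ w ∧ s = t ++ [a] := by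
  constructor
  · rintro ⟨u, hu⟩
    rcases s.eq_nil_or_concat with rfl | ⟨t, c, rfl⟩
    · exact Or.inl rfl
    · rw [List.concat_eq_append, ← List.append_assoc] at hu
      obtain ⟨h1, h2⟩ := List.append_inj' hu rfl
      obtain rfl : c = a := by simpa using h2
      exact Or.inr ⟨t, ⟨u, h1⟩, List.concat_eq_append⟩
  · rintro (rfl | ⟨t, ⟨u, rfl⟩, rfl⟩)
    · exact ⟨w ++ [a], by simp⟩
    · exact ⟨u, by simp⟩

/-- DFA for `Σ* · K`. -/
def sigmaStarDFA (M : DFA α σ) : DFA α (Set σ) where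
  step S a := ((fun q => M.step q a) '' S) ∪ {M.start}
  start := {M.start}
  accept := {S | ∃ q ∈ S, q ∈ M.accept}

theorem sigmaStarDFA_evalFrom (M : DFA α σ) (w : List α) :
    (sigmaStarDFA M).evalFrom {M.start} w
      = {q | ∃ s, s <:+ w ∧ q = M.evalFrom M.start s} := by
  induction w using List.reverseRecOn with
  | nil =>
      ext q
      show q ∈ ({M.start} : Set σ) ↔ _
      constructor
      · rintro rfl; exact ⟨[], List.nil_suffix, rfl⟩
      · rintro ⟨s, hs, rfl⟩
        rw [List.suffix_nil.mp hs]
        rfl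
  | append_singleton w a ih =>
      rw [DFA.evalFrom_append_singleton, ih]
      ext q
      show q ∈ ((fun q => M.step q a) '' _) ∪ {M.start} ↔ _
      constructor
      · rintro (⟨r, ⟨s, hs, rfl⟩, rfl⟩ | rfl)
        · exact ⟨s ++ [a], suffix_append_singleton.mpr (Or.inr ⟨s, hs, rfl⟩),
            by rw [DFA.evalFrom_append_singleton]⟩
        · exact ⟨[], suffix_append_singleton.mpr (Or.inl rfl), rfl⟩
      · rintro ⟨s, hs, rfl⟩
        rcases suffix_append_singleton.mp hs with rfl | ⟨t, ht, rfl⟩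
        · exact Or.inr rfl
        · exact Or.inl ⟨M.evalFrom M.start t, ⟨t, ht, rfl⟩,
            by rw [DFA.evalFrom_append_singleton]⟩

theorem isRegular_sigmaStarConcat {K : Set (List α)} (hK : Language.IsRegular K) :
    Language.IsRegular {w | ∃ u v, w = u ++ v ∧ v ∈ K} := by
  obtain ⟨σ, _, M, rfl⟩ := hK
  refine ⟨Set σ, inferInstance, sigmaStarDFA M, ?_⟩
  ext w
  rw [DFA.mem_accepts]
  show (sigmaStarDFA M).evalFrom {M.start} w ∈ _ ↔ _
  rw [sigmaStarDFA_evalFrom]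
  constructor
  · rintro ⟨q, ⟨s, ⟨u, rfl⟩, rfl⟩, hq⟩
    exact ⟨u, s, rfl, hq⟩
  · rintro ⟨u, v, rfl, hv⟩
    exact ⟨M.evalFrom M.start v, ⟨v, ⟨u, rfl⟩, rfl⟩, hv⟩






theorem evalFrom_cons'' (M : DFA α σ) (s : σ) (a : α) (w : List α) :
    M.evalFrom s (a :: w) = M.evalFrom (M.step s a) w := rfl

/-- DFA for `K · {[a]}`. -/
def appendLetterDFA (M : DFA α σ) (a : α) : DFA α (σ × Prop) where
  step p c := (M.step p.1 c, p.1 ∈ M.accept ∧ c = a)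
  start := (M.start, False)
  accept := {p | p.2}

theorem appendLetterDFA_evalFrom (M : DFA α σ) (a : α) (w : List α) :
    (appendLetterDFA M a).evalFrom (M.start, False) w
      = (M.evalFrom M.start w,
         ∃ u, w = u ++ [a] ∧ M.evalFrom M.start u ∈ M.accept) := by
  induction w using List.reverseRecOn with
  | nil =>
      refine Prod.ext rfl ?_
      show False = _
      refine (propext ?_)
      constructor
      · exact False.elim
      · rintro ⟨u, hu, -⟩; exact absurd hu.symm (List.append_ne_nil_of_right_ne_nil u (by simp))
  | append_singleton w c ih =>
      rw [DFA.evalFrom_append_singleton, ih]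
      refine Prod.ext (M.evalFrom_append_singleton M.start w c).symm ?_
      show (M.evalFrom M.start w ∈ M.accept ∧ c = a) = _
      refine propext ⟨?_, ?_⟩
      · rintro ⟨h, rfl⟩; exact ⟨w, rfl, h⟩
      · rintro ⟨u, hu, h⟩
        obtain ⟨rfl, h2⟩ := List.append_inj' hu rfl
        obtain rfl : c = a := by simpa using h2
        exact ⟨h, rfl⟩

theorem isRegular_appendLetter {K : Set (List α)} (hK : Language.IsRegular K) (a : α) :
    Language.IsRegular ((· ++ [a]) '' K) := by
  obtain ⟨σ, _, M, rfl⟩ := hK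
  refine ⟨σ × Prop, inferInstance, appendLetterDFA M a, ?_⟩
  ext w
  rw [DFA.mem_accepts]
  show (appendLetterDFA M a).evalFrom (M.start, False) w ∈ _ ↔ _
  rw [appendLetterDFA_evalFrom]
  constructor
  · rintro ⟨u, hu, h⟩; exact ⟨u, h, hu.symm⟩
  · rintro ⟨u, h, hu⟩; exact ⟨u, hu.symm, h⟩

open Classical in
/-- DFA for `{[a]} · K`. -/
noncomputable def prependLetterDFA (M : DFA α σ) (a : α) : DFA α (Option (Option σ)) where
  step s c :=
    match s with
    | none => none
    | some none => if c = a then some (some M.start) else none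
    | some (some q) => some (some (M.step q c))
  start := some none
  accept := some '' (some '' M.accept)

open Classical in
theorem prependLetterDFA_step0 (M : DFA α σ) (a c : α) :
    (prependLetterDFA M a).step (some none) c
      = if c = a then some (some M.start) else none := rfl

theorem prependLetterDFA_dead (M : DFA α σ) (a : α) (w : List α) :
    (prependLetterDFA M a).evalFrom none w = none := by
  induction w with
  | nil => rfl
  | cons c w ih => rw [evalFrom_cons'']; exact ih

theorem prependLetterDFA_run (M : DFA α σ) (a : α) (w : List α) (q : σ) :
    (prependLetterDFA M a).evalFrom (some (some q)) w = some (some (M.evalFrom q w)) := by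
  induction w generalizing q with
  | nil => rfl
  | cons c w ih => rw [evalFrom_cons'']; exact ih _

theorem isRegular_prependLetter {K : Set (List α)} (hK : Language.IsRegular K) (a : α) :
    Language.IsRegular ((a :: ·) '' K) := by
  obtain ⟨σ, _, M, rfl⟩ := hK
  refine ⟨Option (Option σ), inferInstance, prependLetterDFA M a, ?_⟩
  ext w
  rw [DFA.mem_accepts]
  show (prependLetterDFA M a).evalFrom (some none) w ∈ some '' (some '' M.accept) ↔ _
  cases w with
  | nil =>
      simp only [DFA.evalFrom_nil]
      constructor
      · rintro ⟨s, ⟨q, -, rfl⟩, h⟩; exact absurd h (by simp)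
      · rintro ⟨v, -, h⟩; exact absurd h (by simp)
  | cons c w =>
      rw [evalFrom_cons'', prependLetterDFA_step0]
      by_cases hc : c = a
      · subst hc
        rw [if_pos rfl, prependLetterDFA_run]
        constructor
        · rintro ⟨s, ⟨q, hq, rfl⟩, h⟩
          obtain rfl : q = M.evalFrom M.start w := by simpa using h
          exact ⟨w, hq, rfl⟩
        · rintro ⟨v, hv, h⟩
          obtain ⟨-, rfl⟩ : c = c ∧ v = w := by simpa using h
          exact ⟨some (M.evalFrom M.start v), ⟨_, hv, rfl⟩, rfl⟩
      · rw [if_neg hc, prependLetterDFA_dead]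
        constructor
        · rintro ⟨s, -, h⟩; exact absurd h (by simp)
        · rintro ⟨v, -, h⟩
          exact absurd (List.head_eq_of_cons_eq h.symm) hc
          
theorem isRegular_prependWord {K : Set (List α)} (hK : Language.IsRegular K) (y : List α) :
    Language.IsRegular ((y ++ ·) '' K) := by
  induction y with
  | nil => simpa using hK
  | cons a y ih =>
      have h := isRegular_prependLetter ih a
      convert h using 1
      rw [Set.image_image]
      rfl

theorem isRegular_appendWord {K : Set (List α)} (hK : Language.IsRegular K) (y : List α) :
    Language.IsRegular ((· ++ y) '' K) := by
  induction y using List.reverseRecOn with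
  | nil => simpa using hK
  | append_singleton y a ih =>
      have h := isRegular_appendLetter ih a
      refine isRegular_of_eq ?_ h
      rw [Set.image_image]
      ext w
      simp [List.append_assoc]

theorem isRegular_nil : Language.IsRegular ({[]} : Set (List α)) := by
  let N : DFA α Prop := ⟨fun _ _ => False, True, {p | p}⟩
  have dead : ∀ w : List α, N.evalFrom False w = False := by
    intro w
    induction w with
    | nil => rfl
    | cons c w ih => exact ih
  refine ⟨Prop, inferInstance, N, ?_⟩
  ext w
  rw [DFA.mem_accepts]
  show N.evalFrom True w ∈ N.accept ↔ _
  cases w with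
  | nil => exact ⟨fun _ => rfl, fun _ => trivial⟩
  | cons c w =>
      rw [evalFrom_cons'', show N.step True c = False from rfl, dead]
      exact ⟨fun h => h.elim, fun h => absurd h (List.cons_ne_nil c w)⟩

theorem isRegular_singleton (w : List α) : Language.IsRegular ({w} : Set (List α)) := by
  have h := isRegular_prependWord isRegular_nil w
  refine isRegular_of_eq ?_ h
  ext z
  simp



end GSAHelp



/-- Generalised self-assembly of a finite language with a regular language is
regular. -/
theorem gsal_fin_reg_regular {α : Type} (L₁ L₂ : Language α)
    (h₁ : (L₁ : Set (List α)).Finite) (h₂ : L₂.IsRegular) :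
    Language.IsRegular (GSAL (L₁ : Set (List α)) (L₂ : Set (List α))) := by
  classical
  open GSAHelp in
  obtain ⟨σ, instσ, M, hM⟩ := h₂
  set D : List α → Set (List α × List α × List α) :=
    fun w₁ => {p | w₁ = p.1 ++ p.2.1 ++ p.2.2 ∧ p.2.1 ≠ []} with hD
  set F : List α → List α × List α × List α → Set (List α) := fun w₁ p =>
    ({z | z = w₁ ∧ ∃ u₂ v₂, u₂ ++ p.2.1 ++ v₂ ∈ L₂} ∪
     {z | z ∈ L₂ ∧ ∃ u₂ v₂, z = u₂ ++ p.2.1 ++ v₂} ∪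
     ((p.1 ++ p.2.1) ++ ·) '' {v | ∃ u₂, u₂ ++ p.2.1 ++ v ∈ L₂} ∪
     (· ++ (p.2.1 ++ p.2.2)) '' {u | ∃ v₂, u ++ p.2.1 ++ v₂ ∈ L₂}) with hF
  have key : GSAL (L₁ : Set (List α)) (L₂ : Set (List α)) =
      ⋃ w₁ ∈ (L₁ : Set (List α)), ⋃ p ∈ D w₁, F w₁ p := by
    ext z
    simp only [GSAL, GSAw, GSAx, Set.mem_iUnion, Set.mem_setOf_eq, exists_prop, hD, hF,
      Set.mem_union, Set.mem_image]
    constructor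
    · rintro ⟨w₁, hw₁, w₂, hw₂, x, hx, u₁, v₁, u₂, v₂, hd1, hd2, hz⟩
      refine ⟨w₁, hw₁, (u₁, x, v₁), ⟨hd1, hx⟩, ?_⟩
      rcases hz with rfl | rfl | rfl | rfl
      · exact Or.inl (Or.inl (Or.inl ⟨hd1.symm, u₂, v₂, hd2 ▸ hw₂⟩))
      · exact Or.inl (Or.inl (Or.inr ⟨hd2 ▸ hw₂, u₂, v₂, rfl⟩))
      · exact Or.inl (Or.inr ⟨v₂, ⟨u₂, hd2 ▸ hw₂⟩, rfl⟩)
      · exact Or.inr ⟨u₂, ⟨v₂, hd2 ▸ hw₂⟩, (List.append_assoc u₂ x v₁).symm⟩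
    · rintro ⟨w₁, hw₁, ⟨u₁, x, v₁⟩, ⟨hd1, hx⟩, hz⟩
      rcases hz with ((⟨rfl, u₂, v₂, hmem⟩ | ⟨hzL, u₂, v₂, rfl⟩) | ⟨v, ⟨u₂, hmem⟩, rfl⟩) |
        ⟨u, ⟨v₂, hmem⟩, rfl⟩
      · exact ⟨_, hw₁, _, hmem, x, hx, u₁, v₁, u₂, v₂, hd1, rfl, Or.inl hd1⟩
      · exact ⟨w₁, hw₁, _, hzL, x, hx, u₁, v₁, u₂, v₂, hd1, rfl, Or.inr (Or.inl rfl)⟩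
      · exact ⟨w₁, hw₁, _, hmem, x, hx, u₁, v₁, u₂, v, hd1, rfl, Or.inr (Or.inr (Or.inl rfl))⟩
      · exact ⟨w₁, hw₁, _, hmem, x, hx, u₁, v₁, u, v₂, hd1, rfl,
          Or.inr (Or.inr (Or.inr (List.append_assoc u x v₁).symm))⟩
  rw [key]
  apply GSAHelp.isRegular_biUnion h₁
  intro w₁ _
  have hDfin : (D w₁).Finite := by
    have hsub : D w₁ ⊆ (fun ij : ℕ × ℕ =>
        (w₁.take ij.1, ((w₁.drop ij.1).take ij.2, (w₁.drop ij.1).drop ij.2))) ''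
        (Set.Iic w₁.length ×ˢ Set.Iic w₁.length) := by
      rintro ⟨u, x, v⟩ ⟨hw, -⟩
      refine ⟨(u.length, x.length), ⟨?_, ?_⟩, ?_⟩
      · rw [hw]; simp
      · rw [hw]; simp; omega
      · rw [hw]
        simp [List.append_assoc, List.take_left, List.drop_left]
    exact (((Set.finite_Iic _).prod (Set.finite_Iic _)).image _).subset hsub
  apply GSAHelp.isRegular_biUnion hDfin
  rintro ⟨u₁, x, v₁⟩ -
  have hQ : Language.IsRegular {v | ∃ u₂, u₂ ++ x ++ v ∈ L₂} := by
    have h := GSAHelp.isRegular_existsStart M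
      {t | ∃ u, t = M.evalFrom (M.evalFrom M.start u) x}
    refine GSAHelp.isRegular_of_eq ?_ h
    ext v
    constructor
    · rintro ⟨u₂, hu⟩
      rw [← hM, DFA.mem_accepts] at hu
      refine ⟨M.evalFrom (M.evalFrom M.start u₂) x, ⟨u₂, rfl⟩, ?_⟩
      rwa [show M.eval (u₂ ++ x ++ v) =
        M.evalFrom (M.evalFrom (M.evalFrom M.start u₂) x) v by
          simp [DFA.eval, DFA.evalFrom_of_append]] at hu
    · rintro ⟨t, ⟨u, rfl⟩, ht⟩
      refine ⟨u, ?_⟩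
      rw [← hM, DFA.mem_accepts]
      rwa [show M.eval (u ++ x ++ v) =
        M.evalFrom (M.evalFrom (M.evalFrom M.start u) x) v by
          simp [DFA.eval, DFA.evalFrom_of_append]]
  have hP : Language.IsRegular {u | ∃ v₂, u ++ x ++ v₂ ∈ L₂} := by
    have h := GSAHelp.isRegular_changeAccept M
      {q | ∃ v', M.evalFrom (M.evalFrom q x) v' ∈ M.accept}
    refine GSAHelp.isRegular_of_eq ?_ h
    ext u
    constructor
    · rintro ⟨v₂, hv⟩
      rw [← hM, DFA.mem_accepts] at hv
      refine ⟨v₂, ?_⟩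
      rwa [show M.eval (u ++ x ++ v₂) =
        M.evalFrom (M.evalFrom (M.evalFrom M.start u) x) v₂ by
          simp [DFA.eval, DFA.evalFrom_of_append]] at hv
    · rintro ⟨v', hv⟩
      refine ⟨v', ?_⟩
      rw [← hM, DFA.mem_accepts]
      rwa [show M.eval (u ++ x ++ v') =
        M.evalFrom (M.evalFrom (M.evalFrom M.start u) x) v' by
          simp [DFA.eval, DFA.evalFrom_of_append]]
  have hA : Language.IsRegular {z : List α | z = w₁ ∧ ∃ u₂ v₂, u₂ ++ x ++ v₂ ∈ L₂} := by
    by_cases hc : ∃ u₂ v₂ : List α, u₂ ++ x ++ v₂ ∈ L₂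
    · have heq : {z : List α | z = w₁ ∧ ∃ u₂ v₂, u₂ ++ x ++ v₂ ∈ L₂} = {w₁} := by
        ext z
        exact ⟨fun h => h.1, fun h => ⟨h, hc⟩⟩
      rw [heq]; exact GSAHelp.isRegular_singleton w₁
    · have heq : {z : List α | z = w₁ ∧ ∃ u₂ v₂, u₂ ++ x ++ v₂ ∈ L₂} = ∅ := by
        ext z
        exact iff_of_false (fun h => hc h.2) (fun h => h)
      rw [heq]; exact GSAHelp.isRegular_empty
  have hB : Language.IsRegular {z : List α | z ∈ L₂ ∧ ∃ u₂ v₂, z = u₂ ++ x ++ v₂} := by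
    have hfact : Language.IsRegular {w : List α | ∃ u v, w = u ++ v ∧
        v ∈ ((x ++ ·) '' Set.univ)} :=
      GSAHelp.isRegular_sigmaStarConcat (GSAHelp.isRegular_prependWord GSAHelp.isRegular_univ x)
    have h := GSAHelp.isRegular_inter (L := (L₂ : Set (List α)))
      (K := {w : List α | ∃ u v, w = u ++ v ∧ v ∈ ((x ++ ·) '' Set.univ)})
      ⟨σ, instσ, M, hM⟩ hfact
    refine GSAHelp.isRegular_of_eq ?_ h
    ext z
    constructor
    · rintro ⟨hz, u₂, v₂, rfl⟩
      exact ⟨hz, u₂, x ++ v₂, List.append_assoc u₂ x v₂, v₂, trivial, rfl⟩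
    · rintro ⟨hz, u, v, rfl, v', -, rfl⟩
      exact ⟨hz, u, v', (List.append_assoc u x v').symm⟩
  have hC : Language.IsRegular (((u₁ ++ x) ++ ·) '' {v | ∃ u₂, u₂ ++ x ++ v ∈ L₂}) :=
    GSAHelp.isRegular_prependWord hQ (u₁ ++ x)
  have hE : Language.IsRegular ((· ++ (x ++ v₁)) '' {u | ∃ v₂, u ++ x ++ v₂ ∈ L₂}) :=
    GSAHelp.isRegular_appendWord hP (x ++ v₁)
  exact GSAHelp.isRegular_union (GSAHelp.isRegular_union (GSAHelp.isRegular_union hA hB) hC) hE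
end

section
/- The generalised self-assembly of two context-free languages is context-free: if L₁ and L₂ are context-free languages (without the empty word), then GSA(L₁,L₂) is context-free. -/
namespace GSA

open ContextFreeGrammar

variable {T : Type}

/-- All ways to split a list as `p ++ [s] ++ q`. -/
def splits {α : Type*} : List α → List (List α × α × List α)
  | [] => []
  | x :: xs => ([], x, xs) :: (splits xs).map (fun pq => (x :: pq.1, pq.2.1, pq.2.2))

lemma mem_splits {α : Type*} : ∀ {l p : List α} {s : α} {q : List α},
    (p, s, q) ∈ splits l ↔ l = p ++ [s] ++ q := by
  intro l
  induction l with
  | nil => intro p s q; simp [splits]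
  | cons x xs ih =>
    intro p s q
    cases p with
    | nil =>
      simp only [splits, List.mem_cons, List.mem_map, List.nil_append,
        List.singleton_append, List.cons.injEq, Prod.mk.injEq]
      constructor
      · rintro (⟨_, rfl, rfl⟩ | ⟨⟨p'', s'', q''⟩, hm, h, _⟩)
        · exact ⟨rfl, rfl⟩
        · simp at h
      · rintro ⟨rfl, rfl⟩; exact Or.inl ⟨trivial, rfl, rfl⟩
    | cons y p' =>
      simp only [splits, List.mem_cons, List.mem_map, List.cons_append, List.cons.injEq,
        Prod.mk.injEq]
      constructor
      · rintro (⟨h, _⟩ | ⟨⟨p'', s'', q''⟩, hm, h1, h2, h3⟩)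
        · simp at h
        · obtain ⟨rfl, rfl⟩ : x = y ∧ p'' = p' := by simpa using h1
          subst h2; subst h3
          exact ⟨rfl, ih.mp hm⟩
      · rintro ⟨rfl, h⟩
        exact Or.inr ⟨⟨p', s, q⟩, ih.mpr h, ⟨rfl, rfl⟩, rfl, rfl⟩

lemma two_split {α : Type*} {l u v p : List α} {s : α} {q : List α}
    (h1 : l = p ++ [s] ++ q) (h2 : l = u ++ v) :
    (∃ q₁, u = p ++ [s] ++ q₁ ∧ q = q₁ ++ v) ∨
    (∃ p₂, v = p₂ ++ [s] ++ q ∧ p = u ++ p₂) := by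
  rw [h1] at h2
  rw [List.append_assoc, List.append_eq_append_iff] at h2
  rcases h2 with ⟨w, hw1, hw2⟩ | ⟨w, hw1, hw2⟩
  · cases w with
    | nil =>
      right
      refine ⟨[], ?_, by simpa using hw1.symm⟩
      simpa using hw2.symm
    | cons s' w' =>
      left
      simp only [List.singleton_append, List.cons_append, List.cons.injEq] at hw2
      obtain ⟨rfl, rfl⟩ := hw2
      exact ⟨w', by rw [hw1]; simp, rfl⟩
  · right
    exact ⟨w, by rw [hw2, List.append_assoc], hw1⟩

lemma three_split {α : Type*} {x o y p : List α} {s : α} {q : List α}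
    (h : x ++ o ++ y = p ++ [s] ++ q) :
    (∃ x₂, x = p ++ [s] ++ x₂ ∧ q = x₂ ++ o ++ y) ∨
    (∃ o₁ o₂, o = o₁ ++ [s] ++ o₂ ∧ p = x ++ o₁ ∧ q = o₂ ++ y) ∨
    (∃ y₁, y = y₁ ++ [s] ++ q ∧ p = x ++ o ++ y₁) := by
  rcases two_split (u := x) (v := o ++ y) h (List.append_assoc x o y) with ⟨q₁, hu, hq⟩ | ⟨p₂, hv, hp⟩
  · exact Or.inl ⟨q₁, hu, by rw [hq, List.append_assoc]⟩
  · rcases two_split (u := o) (v := y) hv rfl with ⟨q₁, ho, hq⟩ | ⟨p₃, hy, hp'⟩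
    · exact Or.inr (Or.inl ⟨p₂, q₁, ho, hp, hq⟩)
    · exact Or.inr (Or.inr ⟨p₃, hy, by rw [hp, hp', List.append_assoc]⟩)

lemma singleton_split {α : Type*} {p : List α} {s x : α} {q : List α}
    (h : p ++ [s] ++ q = [x]) : p = [] ∧ s = x ∧ q = [] := by
  cases p with
  | nil =>
    have := h
    simp only [List.nil_append, List.singleton_append, List.cons.injEq] at this
    exact ⟨rfl, this.1, this.2⟩
  | cons a p' =>
    exfalso
    have := congrArg List.length h
    simp at this


/-! ### Relabelling nonterminals -/

def mapSym {N M : Type} (f : N → M) : Symbol T N → Symbol T M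
  | .terminal t => .terminal t
  | .nonterminal n => .nonterminal (f n)

@[simp] lemma mapSym_terminal {N M : Type} (f : N → M) (t : T) :
    mapSym (T := T) f (Symbol.terminal t) = Symbol.terminal t := rfl

@[simp] lemma mapSym_nonterminal {N M : Type} (f : N → M) (n : N) :
    mapSym (T := T) f (Symbol.nonterminal n) = Symbol.nonterminal (f n) := rfl

def mapRule {N M : Type} (f : N → M) (r : ContextFreeRule T N) : ContextFreeRule T M :=
  ⟨f r.input, r.output.map (mapSym f)⟩

lemma lift_derives {g G : ContextFreeGrammar T} {f : g.NT → G.NT}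
    (hf : ∀ r ∈ g.rules, mapRule f r ∈ G.rules)
    {u v : List (Symbol T g.NT)} (huv : g.Derives u v) :
    G.Derives (u.map (mapSym f)) (v.map (mapSym f)) := by
  induction huv with
  | refl => rfl
  | tail _ last ih =>
    refine ih.trans_produces ?_
    obtain ⟨r, hr, hrw⟩ := last
    obtain ⟨p, q, rfl, rfl⟩ := hrw.exists_parts
    refine ⟨mapRule f r, hf r hr, ?_⟩
    have := (mapRule f r).rewrites_of_exists_parts (p.map (mapSym f)) (q.map (mapSym f))
    simpa [mapRule] using this


/-! ### Modes -/

inductive Mode (T : Type) : Type where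
  | full : Mode T
  | nne : Mode T
  | left (a : T) : Mode T
  | right (a : T) : Mode T
  | cont (a : T) : Mode T
  | eps (a : T) : Mode T

variable {N : Type}

/-- Full-mode lift of a symbol string. -/
def Fmap (l : List (Symbol T N)) : List (Symbol T (N × Mode T)) :=
  l.map (mapSym (fun A => (A, Mode.full)))

/-- Nonempty-mode (erasing) lift of a symbol string. -/
def Nmap (l : List (Symbol T N)) : List (Symbol T (N × Mode T)) :=
  l.filterMap fun s => match s with
    | .terminal _ => none
    | .nonterminal A => some (.nonterminal (A, Mode.nne))

@[simp] lemma Fmap_append (l₁ l₂ : List (Symbol T N)) :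
    Fmap (l₁ ++ l₂) = Fmap l₁ ++ Fmap l₂ := List.map_append

@[simp] lemma Nmap_append (l₁ l₂ : List (Symbol T N)) :
    Nmap (l₁ ++ l₂) = Nmap l₁ ++ Nmap l₂ := List.filterMap_append

@[simp] lemma Fmap_nil : Fmap ([] : List (Symbol T N)) = [] := rfl
@[simp] lemma Nmap_nil : Nmap ([] : List (Symbol T N)) = [] := rfl

@[simp] lemma Fmap_nt (A : N) :
    Fmap [(Symbol.nonterminal A : Symbol T N)] = [Symbol.nonterminal (A, Mode.full)] := rfl

@[simp] lemma Nmap_nt (A : N) :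
    Nmap [(Symbol.nonterminal A : Symbol T N)] = [Symbol.nonterminal (A, Mode.nne)] := rfl

@[simp] lemma Fmap_term (t : T) :
    Fmap [(Symbol.terminal t : Symbol T N)] = [Symbol.terminal t] := rfl

@[simp] lemma Nmap_term (t : T) :
    Nmap [(Symbol.terminal t : Symbol T N)] = [] := rfl

@[simp] lemma Fmap_terms (w : List T) :
    Fmap (w.map (Symbol.terminal) : List (Symbol T N)) = w.map Symbol.terminal := by
  induction w with
  | nil => rfl
  | cons t w ih => simp [Fmap] at *

@[simp] lemma Nmap_terms (w : List T) :
    Nmap (w.map (Symbol.terminal) : List (Symbol T N)) = [] := by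
  induction w with
  | nil => rfl
  | cons t w ih => simp [Nmap] at *

/-- The rules arising from one split of a rule's output, in the various marked modes. -/
def splitRules (TS : List T) (A : N)
    (psq : List (Symbol T N) × Symbol T N × List (Symbol T N)) :
    List (ContextFreeRule T (N × Mode T)) :=
  match psq with
  | (p, .terminal t, q) =>
      [⟨(A, Mode.left t), Fmap p ++ Nmap q⟩,
       ⟨(A, Mode.right t), Nmap p ++ Fmap q⟩,
       ⟨(A, Mode.cont t), Fmap p ++ [Symbol.terminal t] ++ Fmap q⟩,
       ⟨(A, Mode.eps t), Nmap p ++ Nmap q⟩]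
  | (p, .nonterminal B, q) =>
      TS.flatMap fun a =>
        [⟨(A, Mode.left a), Fmap p ++ [Symbol.nonterminal (B, Mode.left a)] ++ Nmap q⟩,
         ⟨(A, Mode.right a), Nmap p ++ [Symbol.nonterminal (B, Mode.right a)] ++ Fmap q⟩,
         ⟨(A, Mode.cont a), Fmap p ++ [Symbol.nonterminal (B, Mode.cont a)] ++ Fmap q⟩,
         ⟨(A, Mode.eps a), Nmap p ++ [Symbol.nonterminal (B, Mode.eps a)] ++ Nmap q⟩]

/-- All mode-lifted rules of a rule. -/
def modeRules (TS : List T) (r : ContextFreeRule T N) :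
    List (ContextFreeRule T (N × Mode T)) :=
  mapRule (fun A => (A, Mode.full)) r
    :: (⟨(r.input, Mode.nne), Nmap r.output⟩ : ContextFreeRule T (N × Mode T))
    :: (splits r.output).flatMap (splitRules TS r.input)

/-- The mode-annotated grammar. -/
noncomputable abbrev mga (g : ContextFreeGrammar T) (TS : List T) : ContextFreeGrammar T :=
  ⟨g.NT × Mode T, (g.initial, Mode.full),
    letI := Classical.decEq (ContextFreeRule T (g.NT × Mode T))
    (g.rules.toList.flatMap (modeRules TS)).toFinset⟩

lemma mem_mga {g : ContextFreeGrammar T} {TS : List T}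
    {r' : ContextFreeRule T (g.NT × Mode T)} :
    r' ∈ (mga g TS).rules ↔ ∃ r ∈ g.rules, r' ∈ modeRules TS r := by
  letI := Classical.decEq (ContextFreeRule T (g.NT × Mode T))
  constructor
  · intro h
    have : r' ∈ g.rules.toList.flatMap (modeRules TS) := by
      exact List.mem_toFinset.mp h
    obtain ⟨r, hr, hm⟩ := List.mem_flatMap.mp this
    exact ⟨r, (Finset.mem_toList).mp hr, hm⟩
  · rintro ⟨r, hr, hm⟩
    show r' ∈ (letI := Classical.decEq (ContextFreeRule T (g.NT × Mode T));
      (g.rules.toList.flatMap (modeRules TS)).toFinset)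
    have : r' ∈ g.rules.toList.flatMap (modeRules TS) :=
      List.mem_flatMap.mpr ⟨r, Finset.mem_toList.mpr hr, hm⟩
    simpa [List.mem_toFinset] using this


/-! ### Step lemmas in the mode grammar -/

section Steps

variable {g : ContextFreeGrammar T} {TS : List T}

lemma produces_F {r : ContextFreeRule T g.NT} (hr : r ∈ g.rules)
    (x y : List (Symbol T g.NT)) :
    (mga g TS).Produces (Fmap (x ++ [Symbol.nonterminal r.input] ++ y))
      (Fmap (x ++ r.output ++ y)) := by
  refine ⟨mapRule (fun A => (A, Mode.full)) r, mem_mga.mpr ⟨r, hr, List.mem_cons_self⟩, ?_⟩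
  have := (mapRule (fun A => (A, Mode.full)) r).rewrites_of_exists_parts (Fmap x) (Fmap y)
  simpa [mapRule, Fmap] using this

lemma produces_N {r : ContextFreeRule T g.NT} (hr : r ∈ g.rules)
    (x y : List (Symbol T g.NT)) :
    (mga g TS).Produces (Nmap (x ++ [Symbol.nonterminal r.input] ++ y))
      (Nmap (x ++ r.output ++ y)) := by
  refine ⟨⟨(r.input, Mode.nne), Nmap r.output⟩,
    mem_mga.mpr ⟨r, hr, List.mem_cons_of_mem _ (List.mem_cons_self)⟩, ?_⟩
  have := (⟨(r.input, Mode.nne), Nmap r.output⟩ :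
    ContextFreeRule T (g.NT × Mode T)).rewrites_of_exists_parts (Nmap x) (Nmap y)
  simpa [Nmap] using this

/-- The mark of a symbol: a nonterminal gets annotated with mode `ma`;
a terminal is kept or erased according to `keep`. -/
def mk (ma : Mode T) (keep : Bool) : Symbol T N → List (Symbol T (N × Mode T))
  | .terminal t => if keep then [.terminal t] else []
  | .nonterminal B => [.nonterminal (B, ma)]

lemma mark_pullback (a : T) (ma : Mode T) (keep : Bool)
    (zl zr : List (Symbol T g.NT) → List (Symbol T (g.NT × Mode T)))
    (hzl : ∀ {r : ContextFreeRule T g.NT}, r ∈ g.rules → ∀ x y,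
      (mga g TS).Produces (zl (x ++ [Symbol.nonterminal r.input] ++ y))
        (zl (x ++ r.output ++ y)))
    (hzr : ∀ {r : ContextFreeRule T g.NT}, r ∈ g.rules → ∀ x y,
      (mga g TS).Produces (zr (x ++ [Symbol.nonterminal r.input] ++ y))
        (zr (x ++ r.output ++ y)))
    (hzl_app : ∀ l₁ l₂, zl (l₁ ++ l₂) = zl l₁ ++ zl l₂)
    (hzr_app : ∀ l₁ l₂, zr (l₁ ++ l₂) = zr l₁ ++ zr l₂)
    (hmk : ∀ {r : ContextFreeRule T g.NT}, r ∈ g.rules →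
      ∀ p (s : Symbol T g.NT) q, r.output = p ++ [s] ++ q →
      (∀ t, s = .terminal t → t = a) →
      (mga g TS).Produces [Symbol.nonterminal (r.input, ma)]
        (zl p ++ mk ma keep s ++ zr q))
    {σ τ : List (Symbol T g.NT)} (hd : g.Derives σ τ) :
    ∀ p s q, τ = p ++ [s] ++ q → (∀ t, s = .terminal t → t = a) →
    ∃ p' s' q', σ = p' ++ [s'] ++ q' ∧ (∀ t, s' = .terminal t → t = a) ∧
      (mga g TS).Derives (zl p' ++ mk ma keep s' ++ zr q')
        (zl p ++ mk ma keep s ++ zr q) := by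
  induction hd with
  | refl => exact fun p s q hpq hG => ⟨p, s, q, hpq, hG, Relation.ReflTransGen.refl⟩
  | tail _ last ih =>
    intro p s q hpq hG
    obtain ⟨r, hr, hrw⟩ := last
    obtain ⟨x, y, hx, hy⟩ := hrw.exists_parts
    subst hy
    rcases three_split hpq with ⟨x₂, hx2, hq⟩ | ⟨o₁, o₂, ho, hp, hq⟩ | ⟨y₁, hy1, hp⟩
    · -- the mark is inside `x`
      obtain ⟨p', s', q', hσ, hG', hder⟩ := ih p s (x₂ ++ [Symbol.nonterminal r.input] ++ y)
        (by rw [hx, hx2]; simp) hG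
      refine ⟨p', s', q', hσ, hG', hder.trans_produces ?_⟩
      have := ((hzr hr x₂ y).append_left (zl p ++ mk ma keep s))
      rw [hq]
      simpa [List.append_assoc] using this
    · -- the mark is inside `r.output`
      obtain ⟨p', s', q', hσ, hG', hder⟩ := ih x (Symbol.nonterminal r.input) y
        hx (by intro t ht; simp at ht)
      refine ⟨p', s', q', hσ, hG', hder.trans_produces ?_⟩
      have step := ((hmk hr o₁ s o₂ ho hG).append_left (zl x)).append_right (zr y)
      rw [hp, hq, hzl_app, hzr_app]
      simpa [mk, List.append_assoc] using step
    · -- the mark is inside `y`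
      obtain ⟨p', s', q', hσ, hG', hder⟩ := ih (x ++ [Symbol.nonterminal r.input] ++ y₁) s q
        (by rw [hx, hy1]; simp) hG
      refine ⟨p', s', q', hσ, hG', hder.trans_produces ?_⟩
      have := ((hzl hr x y₁).append_right (mk ma keep s ++ zr q))
      rw [hp]
      simpa [hzl_app, List.append_assoc] using this


lemma mem_mga_split {r : ContextFreeRule T g.NT} (hr : r ∈ g.rules)
    {p q : List (Symbol T g.NT)} {s : Symbol T g.NT} (h : r.output = p ++ [s] ++ q)
    {r' : ContextFreeRule T (g.NT × Mode T)} (hr' : r' ∈ splitRules TS r.input (p, s, q)) :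
    r' ∈ (mga g TS).rules :=
  mem_mga.mpr ⟨r, hr, List.mem_cons_of_mem _ (List.mem_cons_of_mem _
    (List.mem_flatMap.mpr ⟨(p, s, q), mem_splits.mpr h, hr'⟩))⟩

section HMK

variable {a : T}

lemma hmk_cont {r : ContextFreeRule T g.NT} (haTS : a ∈ TS) (hr : r ∈ g.rules)
    (p : List (Symbol T g.NT)) (s : Symbol T g.NT) (q : List (Symbol T g.NT))
    (h : r.output = p ++ [s] ++ q) (hG : ∀ t, s = .terminal t → t = a) :
    (mga g TS).Produces [Symbol.nonterminal (r.input, Mode.cont a)]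
      (Fmap p ++ mk (Mode.cont a) true s ++ Fmap q) := by
  cases s with
  | terminal t =>
    obtain rfl : t = a := hG t rfl
    refine ⟨⟨(r.input, Mode.cont t), Fmap p ++ [Symbol.terminal t] ++ Fmap q⟩,
      mem_mga_split hr h (by simp [splitRules]), ?_⟩
    simpa [mk] using ContextFreeRule.Rewrites.input_output
  | nonterminal B =>
    refine ⟨⟨(r.input, Mode.cont a), Fmap p ++ [Symbol.nonterminal (B, Mode.cont a)] ++ Fmap q⟩,
      mem_mga_split hr h (by simp [splitRules, List.mem_flatMap]; exact haTS), ?_⟩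
    simpa [mk] using ContextFreeRule.Rewrites.input_output

lemma hmk_left {r : ContextFreeRule T g.NT} (haTS : a ∈ TS) (hr : r ∈ g.rules)
    (p : List (Symbol T g.NT)) (s : Symbol T g.NT) (q : List (Symbol T g.NT))
    (h : r.output = p ++ [s] ++ q) (hG : ∀ t, s = .terminal t → t = a) :
    (mga g TS).Produces [Symbol.nonterminal (r.input, Mode.left a)]
      (Fmap p ++ mk (Mode.left a) false s ++ Nmap q) := by
  cases s with
  | terminal t =>
    obtain rfl : t = a := hG t rfl
    refine ⟨⟨(r.input, Mode.left t), Fmap p ++ Nmap q⟩,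
      mem_mga_split hr h (by simp [splitRules]), ?_⟩
    simpa [mk] using ContextFreeRule.Rewrites.input_output
  | nonterminal B =>
    refine ⟨⟨(r.input, Mode.left a), Fmap p ++ [Symbol.nonterminal (B, Mode.left a)] ++ Nmap q⟩,
      mem_mga_split hr h (by simp [splitRules, List.mem_flatMap]; exact haTS), ?_⟩
    simpa [mk] using ContextFreeRule.Rewrites.input_output

lemma hmk_right {r : ContextFreeRule T g.NT} (haTS : a ∈ TS) (hr : r ∈ g.rules)
    (p : List (Symbol T g.NT)) (s : Symbol T g.NT) (q : List (Symbol T g.NT))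
    (h : r.output = p ++ [s] ++ q) (hG : ∀ t, s = .terminal t → t = a) :
    (mga g TS).Produces [Symbol.nonterminal (r.input, Mode.right a)]
      (Nmap p ++ mk (Mode.right a) false s ++ Fmap q) := by
  cases s with
  | terminal t =>
    obtain rfl : t = a := hG t rfl
    refine ⟨⟨(r.input, Mode.right t), Nmap p ++ Fmap q⟩,
      mem_mga_split hr h (by simp [splitRules]), ?_⟩
    simpa [mk] using ContextFreeRule.Rewrites.input_output
  | nonterminal B =>
    refine ⟨⟨(r.input, Mode.right a), Nmap p ++ [Symbol.nonterminal (B, Mode.right a)] ++ Fmap q⟩,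
      mem_mga_split hr h (by simp [splitRules, List.mem_flatMap]; exact haTS), ?_⟩
    simpa [mk] using ContextFreeRule.Rewrites.input_output

lemma hmk_eps {r : ContextFreeRule T g.NT} (haTS : a ∈ TS) (hr : r ∈ g.rules)
    (p : List (Symbol T g.NT)) (s : Symbol T g.NT) (q : List (Symbol T g.NT))
    (h : r.output = p ++ [s] ++ q) (hG : ∀ t, s = .terminal t → t = a) :
    (mga g TS).Produces [Symbol.nonterminal (r.input, Mode.eps a)]
      (Nmap p ++ mk (Mode.eps a) false s ++ Nmap q) := by
  cases s with
  | terminal t =>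
    obtain rfl : t = a := hG t rfl
    refine ⟨⟨(r.input, Mode.eps t), Nmap p ++ Nmap q⟩,
      mem_mga_split hr h (by simp [splitRules]), ?_⟩
    simpa [mk] using ContextFreeRule.Rewrites.input_output
  | nonterminal B =>
    refine ⟨⟨(r.input, Mode.eps a), Nmap p ++ [Symbol.nonterminal (B, Mode.eps a)] ++ Nmap q⟩,
      mem_mga_split hr h (by simp [splitRules, List.mem_flatMap]; exact haTS), ?_⟩
    simpa [mk] using ContextFreeRule.Rewrites.input_output

end HMK

/-! ### Completeness lemmas for the mode grammar -/

lemma derives_Fmap {σ τ : List (Symbol T g.NT)} (hd : g.Derives σ τ) :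
    (mga g TS).Derives (Fmap σ) (Fmap τ) := by
  induction hd with
  | refl => rfl
  | tail _ last ih =>
    obtain ⟨r, hr, hrw⟩ := last
    obtain ⟨x, y, rfl, rfl⟩ := hrw.exists_parts
    exact ih.trans_produces (produces_F hr x y)

lemma derives_Nmap {σ τ : List (Symbol T g.NT)} (hd : g.Derives σ τ) :
    (mga g TS).Derives (Nmap σ) (Nmap τ) := by
  induction hd with
  | refl => rfl
  | tail _ last ih =>
    obtain ⟨r, hr, hrw⟩ := last
    obtain ⟨x, y, rfl, rfl⟩ := hrw.exists_parts
    exact ih.trans_produces (produces_N hr x y)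

lemma derives_nne {A : g.NT} {w : List T}
    (h : g.Derives [Symbol.nonterminal A] (w.map Symbol.terminal)) :
    (mga g TS).Derives [Symbol.nonterminal (A, Mode.nne)] [] := by
  simpa using derives_Nmap (TS := TS) h

lemma mark_endpoint {a : T} {ma : Mode T} {keep : Bool}
    {zl zr : List (Symbol T g.NT) → List (Symbol T (g.NT × Mode T))}
    (hzl0 : zl [] = []) (hzr0 : zr [] = []) {A : g.NT}
    {p : List (Symbol T g.NT)} {s : Symbol T g.NT} {q : List (Symbol T g.NT)}
    (H : ∃ p' s' q', [Symbol.nonterminal A] = p' ++ [s'] ++ q' ∧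
      (∀ t, s' = .terminal t → t = a) ∧
      (mga g TS).Derives (zl p' ++ mk ma keep s' ++ zr q') (zl p ++ mk ma keep s ++ zr q)) :
    (mga g TS).Derives [Symbol.nonterminal (A, ma)] (zl p ++ mk ma keep s ++ zr q) := by
  obtain ⟨p', s', q', hsplit, _, hder⟩ := H
  obtain ⟨rfl, rfl, rfl⟩ := singleton_split hsplit.symm
  simpa [hzl0, hzr0, mk] using hder

lemma derives_cont {a : T} (haTS : a ∈ TS) {A : g.NT} {u v : List T}
    (h : g.Derives [Symbol.nonterminal A] ((u ++ [a] ++ v).map Symbol.terminal)) :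
    (mga g TS).Derives [Symbol.nonterminal (A, Mode.cont a)]
      ((u ++ [a] ++ v).map Symbol.terminal) := by
  have := mark_pullback a (Mode.cont a) true Fmap Fmap
    (fun hr x y => produces_F hr x y) (fun hr x y => produces_F hr x y)
    Fmap_append Fmap_append
    (fun hr p s q hps hG => hmk_cont haTS hr p s q hps hG) h
    (u.map Symbol.terminal) (Symbol.terminal a) (v.map Symbol.terminal)
    (by simp) (by intro t ht; cases ht; rfl)
  have := mark_endpoint rfl rfl this
  simpa [mk, List.map_append] using this

lemma derives_left {a : T} (haTS : a ∈ TS) {A : g.NT} {u v : List T}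
    (h : g.Derives [Symbol.nonterminal A] ((u ++ [a] ++ v).map Symbol.terminal)) :
    (mga g TS).Derives [Symbol.nonterminal (A, Mode.left a)] (u.map Symbol.terminal) := by
  have := mark_pullback a (Mode.left a) false Fmap Nmap
    (fun hr x y => produces_F hr x y) (fun hr x y => produces_N hr x y)
    Fmap_append Nmap_append
    (fun hr p s q hps hG => hmk_left haTS hr p s q hps hG) h
    (u.map Symbol.terminal) (Symbol.terminal a) (v.map Symbol.terminal)
    (by simp) (by intro t ht; cases ht; rfl)
  have := mark_endpoint rfl rfl this
  simpa [mk, List.map_append] using this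

lemma derives_right {a : T} (haTS : a ∈ TS) {A : g.NT} {u v : List T}
    (h : g.Derives [Symbol.nonterminal A] ((u ++ [a] ++ v).map Symbol.terminal)) :
    (mga g TS).Derives [Symbol.nonterminal (A, Mode.right a)] (v.map Symbol.terminal) := by
  have := mark_pullback a (Mode.right a) false Nmap Fmap
    (fun hr x y => produces_N hr x y) (fun hr x y => produces_F hr x y)
    Nmap_append Fmap_append
    (fun hr p s q hps hG => hmk_right haTS hr p s q hps hG) h
    (u.map Symbol.terminal) (Symbol.terminal a) (v.map Symbol.terminal)
    (by simp) (by intro t ht; cases ht; rfl)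
  have := mark_endpoint rfl rfl this
  simpa [mk, List.map_append] using this

lemma derives_eps {a : T} (haTS : a ∈ TS) {A : g.NT} {u v : List T}
    (h : g.Derives [Symbol.nonterminal A] ((u ++ [a] ++ v).map Symbol.terminal)) :
    (mga g TS).Derives [Symbol.nonterminal (A, Mode.eps a)] [] := by
  have := mark_pullback a (Mode.eps a) false Nmap Nmap
    (fun hr x y => produces_N hr x y) (fun hr x y => produces_N hr x y)
    Nmap_append Nmap_append
    (fun hr p s q hps hG => hmk_eps haTS hr p s q hps hG) h
    (u.map Symbol.terminal) (Symbol.terminal a) (v.map Symbol.terminal)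
    (by simp) (by intro t ht; cases ht; rfl)
  have := mark_endpoint rfl rfl this
  simpa [mk, List.map_append] using this

end Steps


/-! ### Semantics and soundness -/

def symSem {N : Type} (I : N → Set (List T)) : Symbol T N → Set (List T)
  | .terminal t => {[t]}
  | .nonterminal n => I n

def strSem {N : Type} (I : N → Set (List T)) : List (Symbol T N) → Set (List T)
  | [] => {[]}
  | s :: σ => {w | ∃ x y, x ∈ symSem I s ∧ y ∈ strSem I σ ∧ w = x ++ y}

lemma strSem_append {N : Type} (I : N → Set (List T)) :
    ∀ (σ τ : List (Symbol T N)) (w : List T),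
    w ∈ strSem I (σ ++ τ) ↔ ∃ x y, x ∈ strSem I σ ∧ y ∈ strSem I τ ∧ w = x ++ y := by
  intro σ
  induction σ with
  | nil =>
    intro τ w
    constructor
    · intro h; exact ⟨[], w, rfl, by simpa using h, rfl⟩
    · rintro ⟨x, y, hx, hy, rfl⟩
      obtain rfl : x = [] := hx
      simpa using hy
  | cons s σ ih =>
    intro τ w
    constructor
    · rintro ⟨x, y, hx, hy, rfl⟩
      obtain ⟨y₁, y₂, hy₁, hy₂, rfl⟩ := (ih τ y).mp hy
      exact ⟨x ++ y₁, y₂, ⟨x, y₁, hx, hy₁, rfl⟩, hy₂, by simp⟩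
    · rintro ⟨x, y, ⟨x₁, x₂, hx₁, hx₂, rfl⟩, hy, rfl⟩
      exact ⟨x₁, x₂ ++ y, hx₁, (ih τ _).mpr ⟨x₂, y, hx₂, hy, rfl⟩, by simp⟩

lemma strSem_terms {N : Type} (I : N → Set (List T)) (w : List T) :
    w ∈ strSem I (w.map Symbol.terminal) := by
  induction w with
  | nil => exact rfl
  | cons t w ih => exact ⟨[t], w, rfl, ih, rfl⟩

lemma strSem_map {N M : Type} (I : M → Set (List T)) (f : N → M) :
    ∀ (σ : List (Symbol T N)) (w : List T),
    w ∈ strSem I (σ.map (mapSym f)) ↔ w ∈ strSem (I ∘ f) σ := by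
  intro σ
  induction σ with
  | nil => intro w; rfl
  | cons s σ ih =>
    intro w
    have hs : symSem I (mapSym f s) = symSem (I ∘ f) s := by cases s <;> rfl
    constructor
    · rintro ⟨x, y, hx, hy, rfl⟩
      exact ⟨x, y, hs ▸ hx, (ih y).mp hy, rfl⟩
    · rintro ⟨x, y, hx, hy, rfl⟩
      exact ⟨x, y, hs ▸ hx, (ih y).mpr hy, rfl⟩

lemma sound_master {G : ContextFreeGrammar T} (I : G.NT → Set (List T))
    (hrules : ∀ r ∈ G.rules, ∀ w, w ∈ strSem I r.output → w ∈ I r.input)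
    {σ τ : List (Symbol T G.NT)} (hd : G.Derives σ τ) :
    ∀ w, w ∈ strSem I τ → w ∈ strSem I σ := by
  induction hd with
  | refl => exact fun w h => h
  | tail _ last ih =>
    intro w hw
    obtain ⟨r, hr, hrw⟩ := last
    obtain ⟨x, y, rfl, rfl⟩ := hrw.exists_parts
    apply ih
    rw [strSem_append] at hw ⊢
    obtain ⟨w₁, w₂, hw₁, hw₂, rfl⟩ := hw
    rw [strSem_append] at hw₁
    obtain ⟨v₁, v₂, hv₁, hv₂, rfl⟩ := hw₁
    refine ⟨v₁ ++ v₂, w₂, ?_, hw₂, rfl⟩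
    rw [strSem_append]
    exact ⟨v₁, v₂, hv₁, ⟨v₂, [], hrules r hr v₂ hv₂, rfl, by simp⟩, rfl⟩

lemma sound_language {G : ContextFreeGrammar T} (I : G.NT → Set (List T))
    (hrules : ∀ r ∈ G.rules, ∀ w, w ∈ strSem I r.output → w ∈ I r.input)
    {w : List T} (hw : w ∈ G.language) : w ∈ I G.initial := by
  have := sound_master I hrules hw w (strSem_terms I w)
  obtain ⟨x, y, hx, hy, rfl⟩ := this
  obtain rfl : y = [] := hy
  simpa [symSem] using hx

/-- The intended meaning of each mode-annotated nonterminal. -/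
def sem (g : ContextFreeGrammar T) : g.NT × Mode T → Set (List T)
  | (A, .full) => {w | g.Derives [.nonterminal A] (w.map .terminal)}
  | (A, .nne) => {w | w = [] ∧ ∃ u : List T, g.Derives [.nonterminal A] (u.map .terminal)}
  | (A, .left a) => {u | ∃ v, g.Derives [.nonterminal A] ((u ++ [a] ++ v).map .terminal)}
  | (A, .right a) => {v | ∃ u, g.Derives [.nonterminal A] ((u ++ [a] ++ v).map .terminal)}
  | (A, .cont a) => {w | (∃ u v, w = u ++ [a] ++ v) ∧ g.Derives [.nonterminal A] (w.map .terminal)}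
  | (A, .eps a) => {w | w = [] ∧ ∃ u v, g.Derives [.nonterminal A] ((u ++ [a] ++ v).map .terminal)}

section Sound

variable {g : ContextFreeGrammar T} {TS : List T}

lemma Derives.append3 {p m q p' m' q' : List (Symbol T g.NT)}
    (hp : g.Derives p p') (hm : g.Derives m m') (hq : g.Derives q q') :
    g.Derives (p ++ m ++ q) (p' ++ m' ++ q') := by
  rw [List.append_assoc, List.append_assoc]
  exact (hp.append_right (m ++ q)).trans
    (((hm.append_right q).append_left p').trans ((hq.append_left m').append_left p'))

lemma sem_Fmap : ∀ (σ : List (Symbol T g.NT)) (w : List T),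
    w ∈ strSem (sem g) (Fmap σ) → g.Derives σ (w.map Symbol.terminal) := by
  intro σ
  induction σ with
  | nil => intro w h; obtain rfl : w = [] := h; exact Relation.ReflTransGen.refl
  | cons s σ ih =>
    rintro w ⟨x, y, hx, hy, rfl⟩
    have hy' := ih y hy
    cases s with
    | terminal t =>
      obtain rfl : x = [t] := hx
      simpa using hy'.append_left [Symbol.terminal t]
    | nonterminal B =>
      have hx' : g.Derives [Symbol.nonterminal B] (x.map Symbol.terminal) := by
        simpa [symSem, sem] using hx
      have := Derives.append3 (p := []) (p' := []) (Relation.ReflTransGen.refl) hx' hy'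
      simpa using this

lemma sem_Nmap : ∀ (σ : List (Symbol T g.NT)) (w : List T),
    w ∈ strSem (sem g) (Nmap σ) →
    w = [] ∧ ∃ u : List T, g.Derives σ (u.map Symbol.terminal) := by
  intro σ
  induction σ with
  | nil =>
    intro w h; obtain rfl : w = [] := h
    exact ⟨rfl, [], Relation.ReflTransGen.refl⟩
  | cons s σ ih =>
    intro w h
    cases s with
    | terminal t =>
      obtain ⟨rfl, u, hu⟩ := ih w h
      exact ⟨rfl, t :: u, by simpa using hu.append_left [Symbol.terminal t]⟩
    | nonterminal B =>
      obtain ⟨x, y, hx, hy, rfl⟩ := h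
      obtain ⟨rfl, ux, hux⟩ : x = [] ∧ ∃ u : List T, g.Derives [Symbol.nonterminal B]
        (u.map Symbol.terminal) := hx
      obtain ⟨rfl, uy, huy⟩ := ih y hy
      refine ⟨rfl, ux ++ uy, ?_⟩
      have := Derives.append3 (p := []) (p' := []) (Relation.ReflTransGen.refl) hux huy
      simpa using this

end Sound


section RuleSound

variable {g : ContextFreeGrammar T} {TS : List T}

lemma strSem_term_singleton {I : g.NT × Mode T → Set (List T)} {t : T} {x : List T}
    (hx : x ∈ strSem I [(Symbol.terminal t : Symbol T (g.NT × Mode T))]) : x = [t] := by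
  obtain ⟨x₁, x₂, hx₁, hx₂, rfl⟩ := hx
  obtain rfl : x₁ = [t] := hx₁
  obtain rfl : x₂ = [] := hx₂
  rfl

lemma strSem_nt_singleton {I : g.NT × Mode T → Set (List T)} {n : g.NT × Mode T} {x : List T}
    (hx : x ∈ strSem I [(Symbol.nonterminal n : Symbol T (g.NT × Mode T))]) : x ∈ I n := by
  obtain ⟨x₁, x₂, hx₁, hx₂, rfl⟩ := hx
  obtain rfl : x₂ = [] := hx₂
  simpa [symSem] using hx₁

lemma mga_rule_sound :
    ∀ r' ∈ (mga g TS).rules, ∀ w, w ∈ strSem (sem g) r'.output → w ∈ sem g r'.input := by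
  intro r' hr' w hw
  obtain ⟨r, hr, hm⟩ := mem_mga.mp hr'
  have hA : g.Produces [Symbol.nonterminal r.input] r.output :=
    ⟨r, hr, ContextFreeRule.Rewrites.input_output⟩
  rcases List.mem_cons.mp hm with rfl | hm
  · -- full rule
    have := sem_Fmap r.output w (by simpa [mapRule, Fmap] using hw)
    exact hA.trans_derives this
  rcases List.mem_cons.mp hm with rfl | hm
  · -- nne rule
    obtain ⟨rfl, u, hu⟩ := sem_Nmap r.output w hw
    exact ⟨rfl, u, hA.trans_derives hu⟩
  -- split rules
  obtain ⟨⟨p, s, q⟩, hsp, hm⟩ := List.mem_flatMap.mp hm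
  have hout : r.output = p ++ [s] ++ q := mem_splits.mp hsp
  cases s with
  | terminal t =>
    simp only [splitRules, List.mem_cons, List.not_mem_nil, or_false] at hm
    rcases hm with rfl | rfl | rfl | rfl
    · -- left t
      obtain ⟨w₁, w₂, hw₁, hw₂, rfl⟩ := (strSem_append _ _ _ _).mp hw
      have hp := sem_Fmap p w₁ hw₁
      obtain ⟨rfl, u, hq⟩ := sem_Nmap q w₂ hw₂
      refine ⟨u, hA.trans_derives ?_⟩
      rw [hout]
      have := Derives.append3 hp
        (Relation.ReflTransGen.refl (a := [(Symbol.terminal t : Symbol T g.NT)])) hq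
      simpa using this
    · -- right t
      obtain ⟨w₁, w₂, hw₁, hw₂, rfl⟩ := (strSem_append _ _ _ _).mp hw
      obtain ⟨rfl, u, hp⟩ := sem_Nmap p w₁ hw₁
      have hq := sem_Fmap q w₂ hw₂
      refine ⟨u, hA.trans_derives ?_⟩
      rw [hout]
      have := Derives.append3 hp
        (Relation.ReflTransGen.refl (a := [(Symbol.terminal t : Symbol T g.NT)])) hq
      simpa using this
    · -- cont t
      obtain ⟨w₁, w₂, hw₁, hw₂, rfl⟩ := (strSem_append _ _ _ _).mp hw
      obtain ⟨x, w₃, hx, hw₃, rfl⟩ := (strSem_append _ _ _ _).mp hw₁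
      obtain rfl : w₃ = [t] := strSem_term_singleton hw₃
      have hp := sem_Fmap p x hx
      have hq := sem_Fmap q w₂ hw₂
      refine ⟨⟨x, w₂, by simp⟩, hA.trans_derives ?_⟩
      rw [hout]
      have := Derives.append3 hp
        (Relation.ReflTransGen.refl (a := [(Symbol.terminal t : Symbol T g.NT)])) hq
      simpa using this
    · -- eps t
      obtain ⟨w₁, w₂, hw₁, hw₂, rfl⟩ := (strSem_append _ _ _ _).mp hw
      obtain ⟨rfl, up, hp⟩ := sem_Nmap p w₁ hw₁
      obtain ⟨rfl, uq, hq⟩ := sem_Nmap q w₂ hw₂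
      refine ⟨rfl, up, uq, hA.trans_derives ?_⟩
      rw [hout]
      have := Derives.append3 hp
        (Relation.ReflTransGen.refl (a := [(Symbol.terminal t : Symbol T g.NT)])) hq
      simpa using this
  | nonterminal B =>
    simp only [splitRules, List.mem_flatMap, List.mem_cons, List.not_mem_nil, or_false] at hm
    obtain ⟨a, haTS, hm⟩ := hm
    rcases hm with rfl | rfl | rfl | rfl
    · -- left a
      obtain ⟨w₁, w₂, hw₁, hw₂, rfl⟩ := (strSem_append _ _ _ _).mp hw
      obtain ⟨x, w₃, hx, hw₃, rfl⟩ := (strSem_append _ _ _ _).mp hw₁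
      have hp := sem_Fmap p x hx
      obtain ⟨v', hB⟩ : ∃ v' : List T, g.Derives [Symbol.nonterminal B]
          ((w₃ ++ [a] ++ v').map Symbol.terminal) := strSem_nt_singleton hw₃
      obtain ⟨rfl, uq, hq⟩ := sem_Nmap q w₂ hw₂
      refine ⟨v' ++ uq, hA.trans_derives ?_⟩
      rw [hout]
      have := Derives.append3 hp hB hq
      simpa using this
    · -- right a
      obtain ⟨w₁, w₂, hw₁, hw₂, rfl⟩ := (strSem_append _ _ _ _).mp hw
      obtain ⟨x, w₃, hx, hw₃, rfl⟩ := (strSem_append _ _ _ _).mp hw₁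
      obtain ⟨rfl, up, hp⟩ := sem_Nmap p x hx
      obtain ⟨u', hB⟩ : ∃ u' : List T, g.Derives [Symbol.nonterminal B]
          ((u' ++ [a] ++ w₃).map Symbol.terminal) := strSem_nt_singleton hw₃
      have hq := sem_Fmap q w₂ hw₂
      refine ⟨up ++ u', hA.trans_derives ?_⟩
      rw [hout]
      have := Derives.append3 hp hB hq
      simpa using this
    · -- cont a
      obtain ⟨w₁, w₂, hw₁, hw₂, rfl⟩ := (strSem_append _ _ _ _).mp hw
      obtain ⟨x, w₃, hx, hw₃, rfl⟩ := (strSem_append _ _ _ _).mp hw₁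
      have hp := sem_Fmap p x hx
      obtain ⟨⟨u', v', rfl⟩, hB⟩ : (∃ u' v' : List T, w₃ = u' ++ [a] ++ v') ∧
          g.Derives [Symbol.nonterminal B] (w₃.map Symbol.terminal) := strSem_nt_singleton hw₃
      have hq := sem_Fmap q w₂ hw₂
      constructor
      · exact ⟨x ++ u', v' ++ w₂, by simp⟩
      · refine hA.trans_derives ?_
        rw [hout]
        have := Derives.append3 hp hB hq
        simpa using this
    · -- eps a
      obtain ⟨w₁, w₂, hw₁, hw₂, rfl⟩ := (strSem_append _ _ _ _).mp hw
      obtain ⟨x, w₃, hx, hw₃, rfl⟩ := (strSem_append _ _ _ _).mp hw₁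
      obtain ⟨rfl, up, hp⟩ := sem_Nmap p x hx
      obtain ⟨rfl, u', v', hB⟩ : w₃ = [] ∧ ∃ u' v' : List T,
          g.Derives [Symbol.nonterminal B] ((u' ++ [a] ++ v').map Symbol.terminal) :=
        strSem_nt_singleton hw₃
      obtain ⟨rfl, uq, hq⟩ := sem_Nmap q w₂ hw₂
      refine ⟨rfl, up ++ u', v' ++ uq, hA.trans_derives ?_⟩
      rw [hout]
      have := Derives.append3 hp hB hq
      simpa using this

end RuleSound


/-! ### Terminals occurring in a grammar -/

noncomputable def termsOf (g : ContextFreeGrammar T) : List T :=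
  g.rules.toList.flatMap fun r => r.output.filterMap fun s =>
    match s with | .terminal t => some t | .nonterminal _ => none

lemma derives_term_mem {g : ContextFreeGrammar T} {σ τ : List (Symbol T g.NT)} {a : T}
    (hd : g.Derives σ τ) (ha : Symbol.terminal a ∈ τ) :
    Symbol.terminal a ∈ σ ∨ a ∈ termsOf g := by
  induction hd with
  | refl => exact Or.inl ha
  | tail _ last ih =>
    obtain ⟨r, hr, hrw⟩ := last
    obtain ⟨x, y, rfl, rfl⟩ := hrw.exists_parts
    simp only [List.mem_append] at ha
    rcases ha with (hx | hout) | hy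
    · exact ih (by simp [hx])
    · right
      refine List.mem_flatMap.mpr ⟨r, Finset.mem_toList.mpr hr, ?_⟩
      exact List.mem_filterMap.mpr ⟨Symbol.terminal a, hout, rfl⟩
    · exact ih (by simp [hy])

lemma mem_termsOf {g : ContextFreeGrammar T} {a : T} {w : List T}
    (hw : w ∈ g.language) (ha : a ∈ w) : a ∈ termsOf g := by
  have := derives_term_mem hw (List.mem_map.mpr ⟨a, ha, rfl⟩)
  rcases this with h | h
  · simp at h
  · exact h

/-! ### The big grammar -/

section Big

variable (g₁ g₂ : ContextFreeGrammar.{0} T)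

abbrev BigN (g₁ g₂ : ContextFreeGrammar.{0} T) : Type :=
  Option ((g₁.NT × Mode T) ⊕ (g₂.NT × Mode T))

def f₁ : g₁.NT × Mode T → BigN g₁ g₂ := fun m => some (Sum.inl m)
def f₂ : g₂.NT × Mode T → BigN g₁ g₂ := fun m => some (Sum.inr m)

def Srules (a : T) : List (ContextFreeRule T (BigN g₁ g₂)) :=
  [⟨none, [Symbol.nonterminal (f₁ g₁ g₂ (g₁.initial, Mode.left a)), Symbol.terminal a,
      Symbol.nonterminal (f₂ g₁ g₂ (g₂.initial, Mode.right a))]⟩,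
   ⟨none, [Symbol.nonterminal (f₂ g₁ g₂ (g₂.initial, Mode.left a)), Symbol.terminal a,
      Symbol.nonterminal (f₁ g₁ g₂ (g₁.initial, Mode.right a))]⟩,
   ⟨none, [Symbol.nonterminal (f₁ g₁ g₂ (g₁.initial, Mode.cont a)),
      Symbol.nonterminal (f₂ g₁ g₂ (g₂.initial, Mode.eps a))]⟩,
   ⟨none, [Symbol.nonterminal (f₁ g₁ g₂ (g₁.initial, Mode.eps a)),
      Symbol.nonterminal (f₂ g₁ g₂ (g₂.initial, Mode.cont a))]⟩]

noncomputable def TS (g₁ g₂ : ContextFreeGrammar.{0} T) : List T := termsOf g₁ ++ termsOf g₂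

noncomputable def bigRules : List (ContextFreeRule T (BigN g₁ g₂)) :=
  (TS g₁ g₂).flatMap (Srules g₁ g₂)
    ++ ((mga g₁ (TS g₁ g₂)).rules.toList.map (mapRule (f₁ g₁ g₂)))
    ++ ((mga g₂ (TS g₁ g₂)).rules.toList.map (mapRule (f₂ g₁ g₂)))

noncomputable abbrev bigG : ContextFreeGrammar T :=
  ⟨BigN g₁ g₂, none,
    letI := Classical.decEq (ContextFreeRule T (BigN g₁ g₂))
    (bigRules g₁ g₂).toFinset⟩

lemma mem_bigG {r' : ContextFreeRule T (BigN g₁ g₂)} :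
    r' ∈ (bigG g₁ g₂).rules ↔ r' ∈ bigRules g₁ g₂ := by
  letI := Classical.decEq (ContextFreeRule T (BigN g₁ g₂))
  constructor
  · intro h; simpa [bigG, List.mem_toFinset] using h
  · intro h
    show r' ∈ (letI := Classical.decEq (ContextFreeRule T (BigN g₁ g₂));
      (bigRules g₁ g₂).toFinset)
    simpa [List.mem_toFinset] using h

/-- The interpretation of the big grammar's nonterminals. -/
def bigI : BigN g₁ g₂ → Set (List T)
  | none => GSAL (g₁.language : Set (List T)) (g₂.language : Set (List T))
  | some (Sum.inl m) => sem g₁ m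
  | some (Sum.inr m) => sem g₂ m

lemma mem_GSAL_of_parts {L₁ L₂ : Set (List T)} {a : T} {z u₁ v₁ u₂ v₂ : List T}
    (h₁ : u₁ ++ [a] ++ v₁ ∈ L₁) (h₂ : u₂ ++ [a] ++ v₂ ∈ L₂)
    (hz : z = u₁ ++ [a] ++ v₁ ∨ z = u₂ ++ [a] ++ v₂ ∨
      z = u₁ ++ [a] ++ v₂ ∨ z = u₂ ++ [a] ++ v₁) :
    z ∈ GSAL L₁ L₂ := by
  simp only [GSAL, GSAw, GSAx, Set.mem_iUnion, Set.mem_setOf_eq]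
  exact ⟨u₁ ++ [a] ++ v₁, h₁, u₂ ++ [a] ++ v₂, h₂, [a], by simp,
    u₁, v₁, u₂, v₂, rfl, rfl, hz⟩

lemma bigG_rule_sound :
    ∀ r' ∈ (bigG g₁ g₂).rules, ∀ w, w ∈ strSem (bigI g₁ g₂) r'.output →
      w ∈ bigI g₁ g₂ r'.input := by
  intro r' hr' w hw
  rw [mem_bigG] at hr'
  simp only [bigRules, List.mem_append] at hr'
  rcases hr' with (hS | hmap1) | hmap2
  · -- S-rules
    obtain ⟨a, _, hS⟩ := List.mem_flatMap.mp hS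
    simp only [Srules, List.mem_cons, List.not_mem_nil, or_false] at hS
    rcases hS with rfl | rfl | rfl | rfl
    · obtain ⟨x, y, hx, hy, rfl⟩ := hw
      obtain ⟨m, y', hm, hy', rfl⟩ := hy
      obtain ⟨y, e, hy, he, rfl⟩ := hy'
      obtain rfl : e = [] := he
      obtain rfl : m = [a] := hm
      obtain ⟨v₁, h₁⟩ : ∃ v₁ : List T, g₁.Derives [Symbol.nonterminal g₁.initial]
        ((x ++ [a] ++ v₁).map Symbol.terminal) := hx
      obtain ⟨u₂, h₂⟩ : ∃ u₂ : List T, g₂.Derives [Symbol.nonterminal g₂.initial]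
        ((u₂ ++ [a] ++ y).map Symbol.terminal) := hy
      exact mem_GSAL_of_parts h₁ h₂ (Or.inr (Or.inr (Or.inl (by simp))))
    · obtain ⟨x, y, hx, hy, rfl⟩ := hw
      obtain ⟨m, y', hm, hy', rfl⟩ := hy
      obtain ⟨y, e, hy, he, rfl⟩ := hy'
      obtain rfl : e = [] := he
      obtain rfl : m = [a] := hm
      obtain ⟨v₂, h₂⟩ : ∃ v₂ : List T, g₂.Derives [Symbol.nonterminal g₂.initial]
        ((x ++ [a] ++ v₂).map Symbol.terminal) := hx
      obtain ⟨u₁, h₁⟩ : ∃ u₁ : List T, g₁.Derives [Symbol.nonterminal g₁.initial]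
        ((u₁ ++ [a] ++ y).map Symbol.terminal) := hy
      exact mem_GSAL_of_parts h₁ h₂ (Or.inr (Or.inr (Or.inr (by simp))))
    · obtain ⟨x, y, hx, hy, rfl⟩ := hw
      obtain ⟨y', e, hy', he, rfl⟩ := hy
      obtain rfl : e = [] := he
      obtain ⟨⟨u, v, rfl⟩, h₁⟩ : (∃ u v : List T, x = u ++ [a] ++ v) ∧
        g₁.Derives [Symbol.nonterminal g₁.initial] (x.map Symbol.terminal) := hx
      obtain ⟨rfl, u₂, v₂, h₂⟩ : y' = [] ∧ ∃ u₂ v₂ : List T,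
        g₂.Derives [Symbol.nonterminal g₂.initial]
          ((u₂ ++ [a] ++ v₂).map Symbol.terminal) := hy'
      exact mem_GSAL_of_parts h₁ h₂ (Or.inl (by simp))
    · obtain ⟨x, y, hx, hy, rfl⟩ := hw
      obtain ⟨y', e, hy', he, rfl⟩ := hy
      obtain rfl : e = [] := he
      obtain ⟨rfl, u₁, v₁, h₁⟩ : x = [] ∧ ∃ u₁ v₁ : List T,
        g₁.Derives [Symbol.nonterminal g₁.initial]
          ((u₁ ++ [a] ++ v₁).map Symbol.terminal) := hx
      obtain ⟨⟨u, v, rfl⟩, h₂⟩ : (∃ u v : List T, y' = u ++ [a] ++ v) ∧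
        g₂.Derives [Symbol.nonterminal g₂.initial] (y'.map Symbol.terminal) := hy'
      exact mem_GSAL_of_parts h₁ h₂ (Or.inr (Or.inl (by simp)))
  · -- lifted rules of g₁
    obtain ⟨r'', hr'', rfl⟩ := List.mem_map.mp hmap1
    have : w ∈ strSem (bigI g₁ g₂ ∘ f₁ g₁ g₂) r''.output :=
      (strSem_map _ _ _ _).mp hw
    have : w ∈ strSem (sem g₁) r''.output := this
    exact mga_rule_sound r'' (Finset.mem_toList.mp hr'') w this
  · -- lifted rules of g₂
    obtain ⟨r'', hr'', rfl⟩ := List.mem_map.mp hmap2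
    have : w ∈ strSem (bigI g₁ g₂ ∘ f₂ g₁ g₂) r''.output :=
      (strSem_map _ _ _ _).mp hw
    have : w ∈ strSem (sem g₂) r''.output := this
    exact mga_rule_sound r'' (Finset.mem_toList.mp hr'') w this


lemma bigG_lift₁ {σ τ : List (Symbol T (g₁.NT × Mode T))}
    (h : (mga g₁ (TS g₁ g₂)).Derives σ τ) :
    (bigG g₁ g₂).Derives (σ.map (mapSym (f₁ g₁ g₂))) (τ.map (mapSym (f₁ g₁ g₂))) := by
  refine lift_derives ?_ h
  intro r hr
  exact (mem_bigG g₁ g₂).mpr (by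
    simp only [bigRules, List.mem_append]
    exact Or.inl (Or.inr (List.mem_map.mpr ⟨r, Finset.mem_toList.mpr hr, rfl⟩)))

lemma bigG_lift₂ {σ τ : List (Symbol T (g₂.NT × Mode T))}
    (h : (mga g₂ (TS g₁ g₂)).Derives σ τ) :
    (bigG g₁ g₂).Derives (σ.map (mapSym (f₂ g₁ g₂))) (τ.map (mapSym (f₂ g₁ g₂))) := by
  refine lift_derives ?_ h
  intro r hr
  exact (mem_bigG g₁ g₂).mpr (by
    simp only [bigRules, List.mem_append]
    exact Or.inr (List.mem_map.mpr ⟨r, Finset.mem_toList.mpr hr, rfl⟩))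

lemma bigG_S_step {a : T} (haTS : a ∈ TS g₁ g₂)
    {r : ContextFreeRule T (BigN g₁ g₂)} (hrS : r ∈ Srules g₁ g₂ a) (hrin : r.input = none) :
    (bigG g₁ g₂).Produces [Symbol.nonterminal none] r.output := by
  refine ⟨r, (mem_bigG g₁ g₂).mpr ?_, ?_⟩
  · simp only [bigRules, List.mem_append]
    exact Or.inl (Or.inl (List.mem_flatMap.mpr ⟨a, haTS, hrS⟩))
  · have := r.rewrites_of_exists_parts [] []
    simpa [hrin] using this

@[simp] lemma map_mapSym_terms {N M : Type} (f : N → M) (w : List T) :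
    (w.map Symbol.terminal).map (mapSym f) = w.map Symbol.terminal := by
  induction w with
  | nil => rfl
  | cons t w ih => simp [ih]

lemma GSAL_sub_language :
    GSAL (g₁.language : Set (List T)) (g₂.language : Set (List T)) ⊆
      (bigG g₁ g₂).language := by
  intro z hz
  simp only [GSAL, GSAw, GSAx, Set.mem_iUnion, Set.mem_setOf_eq] at hz
  obtain ⟨w₁, hw₁, w₂, hw₂, x, hx, u₁, v₁, u₂, v₂, he₁, he₂, hdisj⟩ := hz
  obtain ⟨a, x', rfl⟩ := List.exists_cons_of_ne_nil hx
  have haTS : a ∈ TS g₁ g₂ := by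
    refine List.mem_append.mpr (Or.inl (mem_termsOf hw₁ ?_))
    rw [he₁]; simp
  have hd₁ : g₁.Derives [Symbol.nonterminal g₁.initial]
      ((u₁ ++ [a] ++ (x' ++ v₁)).map Symbol.terminal) := by
    have := hw₁
    change g₁.Derives [Symbol.nonterminal g₁.initial] (w₁.map Symbol.terminal) at this
    rw [he₁] at this
    simpa using this
  have hd₂ : g₂.Derives [Symbol.nonterminal g₂.initial]
      ((u₂ ++ [a] ++ (x' ++ v₂)).map Symbol.terminal) := by
    have := hw₂
    change g₂.Derives [Symbol.nonterminal g₂.initial] (w₂.map Symbol.terminal) at this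
    rw [he₂] at this
    simpa using this
  show (bigG g₁ g₂).Derives [Symbol.nonterminal none] (z.map Symbol.terminal)
  have dc₁ : (bigG g₁ g₂).Derives
      [Symbol.nonterminal (f₁ g₁ g₂ (g₁.initial, Mode.cont a))]
      ((u₁ ++ [a] ++ (x' ++ v₁)).map Symbol.terminal) := by
    simpa [-List.map_map] using bigG_lift₁ g₁ g₂ (derives_cont haTS hd₁)
  have dc₂ : (bigG g₁ g₂).Derives
      [Symbol.nonterminal (f₂ g₁ g₂ (g₂.initial, Mode.cont a))]
      ((u₂ ++ [a] ++ (x' ++ v₂)).map Symbol.terminal) := by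
    simpa [-List.map_map] using bigG_lift₂ g₁ g₂ (derives_cont haTS hd₂)
  have de₁ : (bigG g₁ g₂).Derives
      [Symbol.nonterminal (f₁ g₁ g₂ (g₁.initial, Mode.eps a))] [] := by
    simpa using bigG_lift₁ g₁ g₂ (derives_eps haTS hd₁)
  have de₂ : (bigG g₁ g₂).Derives
      [Symbol.nonterminal (f₂ g₁ g₂ (g₂.initial, Mode.eps a))] [] := by
    simpa using bigG_lift₂ g₁ g₂ (derives_eps haTS hd₂)
  have dl₁ : (bigG g₁ g₂).Derives
      [Symbol.nonterminal (f₁ g₁ g₂ (g₁.initial, Mode.left a))]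
      (u₁.map Symbol.terminal) := by
    simpa [-List.map_map] using bigG_lift₁ g₁ g₂ (derives_left haTS hd₁)
  have dl₂ : (bigG g₁ g₂).Derives
      [Symbol.nonterminal (f₂ g₁ g₂ (g₂.initial, Mode.left a))]
      (u₂.map Symbol.terminal) := by
    simpa [-List.map_map] using bigG_lift₂ g₁ g₂ (derives_left haTS hd₂)
  have dr₁ : (bigG g₁ g₂).Derives
      [Symbol.nonterminal (f₁ g₁ g₂ (g₁.initial, Mode.right a))]
      ((x' ++ v₁).map Symbol.terminal) := by
    simpa [-List.map_map] using bigG_lift₁ g₁ g₂ (derives_right haTS hd₁)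
  have dr₂ : (bigG g₁ g₂).Derives
      [Symbol.nonterminal (f₂ g₁ g₂ (g₂.initial, Mode.right a))]
      ((x' ++ v₂).map Symbol.terminal) := by
    simpa [-List.map_map] using bigG_lift₂ g₁ g₂ (derives_right haTS hd₂)
  rcases hdisj with rfl | rfl | rfl | rfl
  · -- z = w₁ : use the rule S → (i₁, cont a) (i₂, eps a)
    have step := bigG_S_step g₁ g₂ haTS
      (r := ⟨none, [Symbol.nonterminal (f₁ g₁ g₂ (g₁.initial, Mode.cont a)),
        Symbol.nonterminal (f₂ g₁ g₂ (g₂.initial, Mode.eps a))]⟩)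
      (by simp [Srules]) rfl
    refine step.trans_derives ?_
    have h1 := dc₁.append_right [Symbol.nonterminal (f₂ g₁ g₂ (g₂.initial, Mode.eps a))]
    have h2 := de₂.append_left ((u₁ ++ [a] ++ (x' ++ v₁)).map Symbol.terminal)
    have := h1.trans h2
    simpa using this
  · -- z = w₂ : use the rule S → (i₁, eps a) (i₂, cont a)
    have step := bigG_S_step g₁ g₂ haTS
      (r := ⟨none, [Symbol.nonterminal (f₁ g₁ g₂ (g₁.initial, Mode.eps a)),
        Symbol.nonterminal (f₂ g₁ g₂ (g₂.initial, Mode.cont a))]⟩)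
      (by simp [Srules]) rfl
    refine step.trans_derives ?_
    have h1 := de₁.append_right [Symbol.nonterminal (f₂ g₁ g₂ (g₂.initial, Mode.cont a))]
    have h2 := h1.trans dc₂
    simpa using h2
  · -- z = u₁ (a x') v₂ : use S → (i₁, left a) a (i₂, right a)
    have step := bigG_S_step g₁ g₂ haTS
      (r := ⟨none, [Symbol.nonterminal (f₁ g₁ g₂ (g₁.initial, Mode.left a)),
        Symbol.terminal a,
        Symbol.nonterminal (f₂ g₁ g₂ (g₂.initial, Mode.right a))]⟩)
      (by simp [Srules]) rfl
    refine step.trans_derives ?_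
    have := Derives.append3 (g := bigG g₁ g₂) (m := [Symbol.terminal a])
      (m' := [Symbol.terminal a]) dl₁ Relation.ReflTransGen.refl dr₂
    simpa using this
  · -- z = u₂ (a x') v₁ : use S → (i₂, left a) a (i₁, right a)
    have step := bigG_S_step g₁ g₂ haTS
      (r := ⟨none, [Symbol.nonterminal (f₂ g₁ g₂ (g₂.initial, Mode.left a)),
        Symbol.terminal a,
        Symbol.nonterminal (f₁ g₁ g₂ (g₁.initial, Mode.right a))]⟩)
      (by simp [Srules]) rfl
    refine step.trans_derives ?_
    have := Derives.append3 (g := bigG g₁ g₂) (m := [Symbol.terminal a])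
      (m' := [Symbol.terminal a]) dl₂ Relation.ReflTransGen.refl dr₁
    simpa using this


lemma language_sub_GSAL {w : List T} (hw : w ∈ (bigG g₁ g₂).language) :
    w ∈ GSAL (g₁.language : Set (List T)) (g₂.language : Set (List T)) :=
  sound_language (bigI g₁ g₂) (bigG_rule_sound g₁ g₂) hw

end Big

end GSA

/-- Generalised self-assembly of two ε-free context-free languages is
context-free. -/
theorem gsal_contextFree {T : Type} (L₁ L₂ : Language T)
    (h₁ : L₁.IsContextFree) (h₂ : L₂.IsContextFree)
    (he₁ : [] ∉ L₁) (he₂ : [] ∉ L₂) :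
    Language.IsContextFree (GSAL (L₁ : Set (List T)) (L₂ : Set (List T))) := by
  obtain ⟨g₁, rfl⟩ := h₁
  obtain ⟨g₂, rfl⟩ := h₂
  refine ⟨GSA.bigG g₁ g₂, Set.Subset.antisymm ?_ (GSA.GSAL_sub_language g₁ g₂)⟩
  intro w hw
  exact GSA.language_sub_GSAL g₁ g₂ hw
end

section
/- GSA(L₁,L₂) can be expressed via single-symbol overlaps: GSA(L₁,L₂) equals the union of L₁' ∪ L₂' with the set {u₁ a v₂ : u₁ a v₁ ∈ L₁, u₂ a v₂ ∈ L₂ for some words u₁,v₁,u₂,v₂ and symbol a} ∪ {u₂ a v₁ : u₁ a v₁ ∈ L₁, u₂ a v₂ ∈ L₂}, where L₁' (resp. L₂') is the set of words of L₁ (resp. L₂) sharing a nonempty subword with some word of L₂ (resp. L₁). In particular, overlapping over a single symbol generates the same crossover words as overlapping over arbitrary nonempty subwords. -/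
/-- GSA(L₁,L₂) is generated by single-symbol overlaps, together with the
words of each language sharing a nonempty subword with a word of the other. -/
theorem gsal_eq_single_symbol_overlaps {α : Type*} (L₁ L₂ : Set (List α)) :
    GSAL L₁ L₂ =
      {w ∈ L₁ | ∃ w₂ ∈ L₂, ∃ x : List α, x ≠ [] ∧ x <:+: w ∧ x <:+: w₂} ∪
      {w ∈ L₂ | ∃ w₁ ∈ L₁, ∃ x : List α, x ≠ [] ∧ x <:+: w ∧ x <:+: w₁} ∪
      {z | ∃ (a : α) (u₁ v₁ u₂ v₂ : List α),
        u₁ ++ [a] ++ v₁ ∈ L₁ ∧ u₂ ++ [a] ++ v₂ ∈ L₂ ∧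
        (z = u₁ ++ [a] ++ v₂ ∨ z = u₂ ++ [a] ++ v₁)} := by
  ext z
  simp only [GSAL, GSAw, GSAx, Set.mem_iUnion, Set.mem_setOf_eq, Set.mem_union, Set.mem_sep_iff]
  constructor
  · rintro ⟨w₁, h₁, w₂, h₂, x, hx, u₁, v₁, u₂, v₂, e₁, e₂, hz⟩
    obtain ⟨a, x', rfl⟩ : ∃ a x', x = a :: x' := by
      cases x with
      | nil => exact absurd rfl hx
      | cons a x' => exact ⟨a, x', rfl⟩
    rcases hz with rfl | rfl | rfl | rfl
    · exact Or.inl (Or.inl ⟨e₁ ▸ h₁, w₂, h₂, a :: x', hx, ⟨u₁, v₁, rfl⟩,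
        ⟨u₂, v₂, e₂.symm⟩⟩)
    · exact Or.inl (Or.inr ⟨e₂ ▸ h₂, w₁, h₁, a :: x', hx, ⟨u₂, v₂, rfl⟩,
        ⟨u₁, v₁, e₁.symm⟩⟩)
    · refine Or.inr ⟨a, u₁, x' ++ v₁, u₂, x' ++ v₂, ?_, ?_, Or.inl (by simp)⟩
      · rw [show u₁ ++ [a] ++ (x' ++ v₁) = u₁ ++ (a :: x') ++ v₁ by simp, ← e₁]; exact h₁
      · rw [show u₂ ++ [a] ++ (x' ++ v₂) = u₂ ++ (a :: x') ++ v₂ by simp, ← e₂]; exact h₂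
    · refine Or.inr ⟨a, u₁, x' ++ v₁, u₂, x' ++ v₂, ?_, ?_, Or.inr (by simp)⟩
      · rw [show u₁ ++ [a] ++ (x' ++ v₁) = u₁ ++ (a :: x') ++ v₁ by simp, ← e₁]; exact h₁
      · rw [show u₂ ++ [a] ++ (x' ++ v₂) = u₂ ++ (a :: x') ++ v₂ by simp, ← e₂]; exact h₂
  · rintro ((⟨hz, w₂, h₂, x, hx, ⟨u₁, v₁, e₁⟩, ⟨u₂, v₂, e₂⟩⟩ |
      ⟨hz, w₁, h₁, x, hx, ⟨u₂, v₂, e₂⟩, ⟨u₁, v₁, e₁⟩⟩) |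
      ⟨a, u₁, v₁, u₂, v₂, h₁, h₂, hz⟩)
    · exact ⟨z, hz, w₂, h₂, x, hx, u₁, v₁, u₂, v₂, e₁.symm, e₂.symm, Or.inl e₁.symm⟩
    · exact ⟨w₁, h₁, z, hz, x, hx, u₁, v₁, u₂, v₂, e₁.symm, e₂.symm,
        Or.inr (Or.inl e₂.symm)⟩
    · exact ⟨_, h₁, _, h₂, [a], by simp, u₁, v₁, u₂, v₂, rfl, rfl,
        Or.inr (Or.inr hz)⟩
end
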